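/- arXiv:1605.06484 — 6 statements merged into one kernel-verified Lean document; each statement's English description precedes it below -/
import Mathlib

section
/- Let p be an odd prime, let a, b ∈ ℂ_p with R = |a − b|_p > 0, let f be holomorphic on the arc 𝒜(a,b) with power series f(x) = Σ_{n≥0} c_n (x − b)^n, and let φ be any path sequence. Then for every k in the domain of φ, A_{f,φ}(k) = − Σ_{n ≥ p^{φ(k)} − 1} c_n (a − b)^{n+1} · Σ_{j ≥ 1} (−1)^{j−1} · C(n, j·p^{φ(k)} − 1), where C(n,m) denotes the binomial coefficient (so the inner sum over j has only finitely many non-zero terms). -/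
/-!
Throughout, `K` plays the role of `ℂ_p`, the completion of an algebraic closure of `ℚ_p`:
it is a complete, algebraically closed, nonarchimedean (ultrametric) normed field equipped
with an isometric `ℚ_[p]`-algebra structure (hypothesis `hKext`).
-/

open scoped BigOperators

/-- A *path sequence*: a function defined (positive-valued and strictly increasing)
for `k ≥ k₀`, for some positive integer `k₀`. -/
structure PathSeq where
  toFun : ℕ → ℕ
  k₀ : ℕ
  k₀_pos : 0 < k₀
  pos : ∀ k, k₀ ≤ k → 0 < toFun k
  mono : ∀ k l, k₀ ≤ k → k < l → toFun k < toFun l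

/-- The Riemann-type sum `A_{f,φ}(k)` (with `N = φ(k)`):
`p^{-N} ∑_ζ (b - a) ζ · f (a + (b - a) ζ)`, `ζ` ranging over the `p^N`-th roots of unity. -/
noncomputable def Asum (p : ℕ) (K : Type*) [NormedField K] (a b : K) (f : K → K) (N : ℕ) : K :=
  ((p : K) ^ N)⁻¹ *
    ∑ ζ ∈ Polynomial.nthRootsFinset (p ^ N) (1 : K), (b - a) * ζ * f (a + (b - a) * ζ)

/-- `ψ` is, for `k ≥ k₀`, a subsequence of the path sequence `φ`. -/
def SubseqFrom (ψ φ : PathSeq) (k₀ : ℕ) : Prop :=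
  ∃ σ : ℕ → ℕ, (∀ k l, k₀ ≤ k → k < l → σ k < σ l) ∧
    ∀ k, k₀ ≤ k → φ.k₀ ≤ σ k ∧ ψ.toFun k = φ.toFun (σ k)

/-- An *interlocked* family of path sequences: nonempty, and any two members have a common
member-subsequence. -/
def Interlocked (Φ : Set PathSeq) : Prop :=
  Φ.Nonempty ∧ ∀ φ₁ ∈ Φ, ∀ φ₂ ∈ Φ, ∃ φ₃ ∈ Φ, ∃ k₀ : ℕ, 0 < k₀ ∧
    SubseqFrom φ₃ φ₁ k₀ ∧ SubseqFrom φ₃ φ₂ k₀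

/-- `∫_{𝒜(a,b),Φ} f(x) dx = L`: for every `ε > 0` there are `φ ∈ Φ` and `M` such that
`|A_{f,φ}(k) - L| < ε` for all `k > M` (in the domain of `φ`). -/
def HasIntegral (p : ℕ) (K : Type*) [NormedField K] (a b : K) (f : K → K)
    (Φ : Set PathSeq) (L : K) : Prop :=
  ∀ ε : ℝ, 0 < ε → ∃ φ ∈ Φ, ∃ M : ℕ, φ.k₀ ≤ M ∧
    ∀ k, M < k → ‖Asum p K a b f (φ.toFun k) - L‖ < ε

/-- `f` is holomorphic on `S`: its values on `S` are given by the single power series with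
coefficients `c`, centered at `b`, convergent on `S`. -/
def HolomorphicOn' (K : Type*) [NormedField K] (c : ℕ → K) (b : K) (f : K → K)
    (S : Set K) : Prop :=
  ∀ x ∈ S, Summable (fun n : ℕ => c n * (x - b) ^ n) ∧ f x = ∑' n : ℕ, c n * (x - b) ^ n

/-- The arc `𝒜(a,b)`: the open disc of radius `R = |a - b|` around `b`. -/
def arc (K : Type*) [NormedField K] (a b : K) : Set K := {x : K | ‖x - b‖ < ‖a - b‖}

/-- `c` are controlled coefficients of order `β` (for the radius `R`). -/
def Controlled (K : Type*) [NormedField K] (c : ℕ → K) (R β : ℝ) : Prop :=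
  ∃ M n₀ : ℝ, 0 < n₀ ∧ ∀ n : ℕ, n₀ < (n : ℝ) → ‖c n‖ * R ^ n < M * (n : ℝ) ^ β

/-- The interlocked family `Φ_α = {k ↦ α + λ k : λ ∈ ℤ⁺}`. -/
def PhiAlpha (α : ℕ) : Set PathSeq :=
  {φ : PathSeq | ∃ lam : ℕ, 0 < lam ∧ ∀ k : ℕ, φ.toFun k = α + lam * k}

open Finset Polynomial Filter

-- Sum of m-th powers of all q-th roots of unity.
lemma sum_pow_nthRoots {K : Type*} [Field K] {q : ℕ} (hq : 0 < q) {ξ : K}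
    (hξ : IsPrimitiveRoot ξ q) (m : ℕ) :
    ∑ ζ ∈ nthRootsFinset q (1 : K), ζ ^ m = if q ∣ m then (q : K) else 0 := by
  by_cases hd : q ∣ m
  · rw [if_pos hd]
    obtain ⟨d, rfl⟩ := hd
    rw [Finset.sum_congr rfl (fun ζ hζ => by
      rw [pow_mul, (Polynomial.mem_nthRootsFinset hq 1).mp hζ, one_pow]),
      Finset.sum_const, hξ.card_nthRootsFinset, nsmul_eq_mul, mul_one]
  · rw [if_neg hd]
    have hξm : ξ ^ m ≠ 1 := fun h => hd ((hξ.pow_eq_one_iff_dvd m).mp h)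
    have hξ0 : ξ ≠ 0 := hξ.ne_zero hq.ne'
    have key : ∑ ζ ∈ nthRootsFinset q (1 : K), ζ ^ m
        = ξ ^ m * ∑ ζ ∈ nthRootsFinset q (1 : K), ζ ^ m := by
      rw [Finset.mul_sum]
      refine Finset.sum_nbij' (fun ζ => ξ⁻¹ * ζ) (fun ζ => ξ * ζ) ?_ ?_ ?_ ?_ ?_
      · intro ζ hζ
        rw [← mul_one (1 : K)]
        refine Polynomial.mul_mem_nthRootsFinset ?_ hζ
        rw [Polynomial.mem_nthRootsFinset hq, inv_pow, hξ.pow_eq_one, inv_one]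
      · intro ζ hζ
        rw [← mul_one (1 : K)]
        exact Polynomial.mul_mem_nthRootsFinset (hξ.mem_nthRootsFinset hq) hζ
      · intro ζ hζ
        field_simp
      · intro ζ hζ
        field_simp
      · intro ζ hζ
        rw [mul_pow, inv_pow, ← mul_assoc, mul_inv_cancel₀ (pow_ne_zero _ hξ0), one_mul]
    have h2 : (1 - ξ ^ m) * (∑ ζ ∈ nthRootsFinset q (1 : K), ζ ^ m) = 0 := by
      rw [sub_mul, one_mul, ← key, sub_self]
    rcases mul_eq_zero.mp h2 with h | h
    · exact absurd (sub_eq_zero.mp h).symm hξm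
    · exact h

-- norm of ζ for a root of unity is 1
lemma norm_root_eq_one {K : Type*} [NormedField K] {q : ℕ} (hq : 0 < q) {ζ : K}
    (hζ : ζ ^ q = 1) : ‖ζ‖ = 1 := by
  have h : ‖ζ‖ ^ q = 1 := by rw [← norm_pow, hζ, norm_one]
  rcases lt_trichotomy ‖ζ‖ 1 with h1 | h1 | h1
  · exact absurd h (by simpa using (pow_lt_one₀ (norm_nonneg _) h1 hq.ne').ne)
  · exact h1
  · exact absurd h (by simpa using (one_lt_pow₀ h1 hq.ne').ne')

-- p-adic fact: a nontrivial p^N-th root of unity is at distance < 1 from 1.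
set_option maxHeartbeats 800000 in
lemma norm_sub_one_lt {p : ℕ} [hp : Fact (Nat.Prime p)] {K : Type*} [NormedField K]
    [IsUltrametricDist K] [Algebra ℚ_[p] K]
    (hKext : ∀ r : ℚ_[p], ‖algebraMap ℚ_[p] K r‖ = ‖r‖)
    {N : ℕ} (hN : 0 < N) {ζ : K} (hζ : ζ ^ (p ^ N) = 1) (hζ1 : ζ ≠ 1) :
    ‖ζ - 1‖ < 1 := by
  have hq : 0 < p ^ N := pow_pos hp.out.pos N
  obtain ⟨q, hq'⟩ : ∃ q', p ^ N = q' + 1 := ⟨p ^ N - 1, (Nat.succ_pred_eq_of_pos hq).symm⟩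
  rw [hq'] at hζ
  have hnormζ : ‖ζ‖ = 1 := norm_root_eq_one (q := q + 1) (Nat.succ_pos q) hζ
  have hle : ‖ζ - 1‖ ≤ 1 := by
    have := IsUltrametricDist.norm_add_le_max ζ (-1)
    simpa [hnormζ, ← sub_eq_add_neg] using this
  by_contra hcon
  have hu1 : ‖ζ - 1‖ = 1 := le_antisymm hle (not_lt.mp hcon)
  set u := ζ - 1 with hudef
  -- expand (u + 1) ^ q = 1
  have hexp : ∑ i ∈ Finset.range (q + 1 + 1), u ^ i * (((q + 1).choose i : K)) = 1 := by
    have h0 : (u + 1) ^ (q + 1) = 1 := by rw [hudef]; simpa using hζ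
    rw [add_pow] at h0
    simpa [one_pow] using h0
  rw [Finset.sum_range_succ'] at hexp
  simp only [pow_zero, Nat.choose_zero_right, Nat.cast_one, one_mul] at hexp
  have hzero : ∑ i ∈ Finset.range (q + 1), u ^ (i + 1) * (((q + 1).choose (i + 1) : K)) = 0 := by
    rwa [add_eq_right] at hexp
  -- peel off the top term
  set q' := q with hq'def
  rw [Finset.sum_range_succ] at hzero
  have htop : u ^ (q' + 1) = -∑ i ∈ Finset.range q', u ^ (i + 1) * ((q' + 1).choose (i + 1) : K) := by
    have h1 : ((q' + 1).choose (q' + 1) : K) = 1 := by simp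
    rw [h1, mul_one] at hzero
    exact eq_neg_of_add_eq_zero_right hzero
  have hnorm_top : ‖u ^ (q' + 1)‖ = 1 := by rw [norm_pow, hu1, one_pow]
  have hbound : ‖∑ i ∈ Finset.range q', u ^ (i + 1) * ((q' + 1).choose (i + 1) : K)‖ ≤ (p : ℝ)⁻¹ := by
    refine IsUltrametricDist.norm_sum_le_of_forall_le_of_nonneg (by positivity) ?_
    intro i hi
    rw [Finset.mem_range] at hi
    have hdvd : p ∣ (q' + 1).choose (i + 1) := by
      have h3 : i + 1 ≠ p ^ N := by omega
      have := Nat.Prime.dvd_choose_pow (p := p) (n := N) (k := i + 1) hp.out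
        (Nat.succ_ne_zero i) h3
      rwa [hq'] at this
    have hC : ‖(((q' + 1).choose (i + 1) : ℕ) : K)‖ ≤ (p : ℝ)⁻¹ := by
      have h1 : (( ((q' + 1).choose (i + 1) : ℕ) : K)) =
          algebraMap ℚ_[p] K (((q' + 1).choose (i + 1) : ℕ) : ℚ_[p]) := by
        rw [map_natCast]
      rw [h1, hKext]
      have h2 : ‖((((q' + 1).choose (i + 1) : ℕ) : ℤ) : ℚ_[p])‖ ≤ (p : ℝ) ^ (-(1 : ℕ) : ℤ) := by
        rw [Padic.norm_int_le_pow_iff_dvd]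
        simpa using Int.natCast_dvd_natCast.mpr hdvd
      simpa using h2
    calc ‖u ^ (i + 1) * (((q' + 1).choose (i + 1) : ℕ) : K)‖
        = ‖u‖ ^ (i + 1) * ‖(((q' + 1).choose (i + 1) : ℕ) : K)‖ := by rw [norm_mul, norm_pow]
      _ ≤ (p : ℝ)⁻¹ := by rw [hu1, one_pow, one_mul]; exact hC
  rw [htop, norm_neg] at hnorm_top
  have hp1 : (1 : ℝ) < p := by exact_mod_cast hp.out.one_lt
  have : (p : ℝ)⁻¹ < 1 := inv_lt_one_of_one_lt₀ hp1
  linarith [hnorm_top ▸ hbound]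

lemma neg_one_pow_mul_sub_one {K : Type*} [Field K] {q j : ℕ} (hodd : Odd q) (hj : 1 ≤ j) :
    (-1 : K) ^ (j * q - 1) = (-1 : K) ^ (j - 1) := by
  have hq1 : 1 ≤ q := hodd.pos
  have h1 : j * q - 1 = (q - 1) * j + (j - 1) := by
    have h2 : j * q = (q - 1) * j + j := by
      calc j * q = j * ((q - 1) + 1) := by rw [Nat.sub_add_cancel hq1]
        _ = (q - 1) * j + j := by ring
    omega
  rw [h1, pow_add, pow_mul]
  have heven : Even (q - 1) := Nat.Odd.sub_odd hodd odd_one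
  rw [heven.neg_one_pow, one_pow, one_mul]

lemma reindex_sum {K : Type*} [Field K] {q : ℕ} (hq : 0 < q) (hodd : Odd q) (n : ℕ) :
    ∑ i ∈ (Finset.range (n + 1)).filter (fun i => q ∣ (i + 1)),
        ((-1 : K) ^ i * (n.choose i : K))
      = ∑ j ∈ Finset.Icc 1 (n + 1), (-1 : K) ^ (j - 1) * (n.choose (j * q - 1) : K) := by
  rw [← Finset.sum_filter_add_sum_filter_not (Finset.Icc 1 (n + 1)) (fun j => j * q ≤ n + 1)]
  have hzero : ∑ j ∈ (Finset.Icc 1 (n + 1)).filter (fun j => ¬ j * q ≤ n + 1),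
      (-1 : K) ^ (j - 1) * (n.choose (j * q - 1) : K) = 0 := by
    refine Finset.sum_eq_zero fun j hj => ?_
    simp only [Finset.mem_filter, Finset.mem_Icc, not_le] at hj
    have : n < j * q - 1 := by
      have h1 : 1 ≤ j := hj.1.1
      have := hj.2
      omega
    rw [Nat.choose_eq_zero_of_lt this, Nat.cast_zero, mul_zero]
  rw [hzero, add_zero]
  refine (Finset.sum_nbij' (fun j => j * q - 1) (fun i => (i + 1) / q) ?_ ?_ ?_ ?_ ?_).symm
  · intro j hj
    simp only [Finset.mem_filter, Finset.mem_Icc] at hj ⊢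
    simp only [Finset.mem_range]
    have h1 : 1 ≤ j := hj.1.1
    have h2 : j * q ≤ n + 1 := hj.2
    have h3 : 1 ≤ j * q := Nat.one_le_iff_ne_zero.mpr (Nat.mul_ne_zero (by omega) (by omega))
    constructor
    · omega
    · have h4 : j * q - 1 + 1 = j * q := by omega
      rw [h4]
      exact dvd_mul_left q j
  · intro i hi
    simp only [Finset.mem_filter, Finset.mem_range] at hi
    obtain ⟨hi1, d, hd⟩ := hi
    have hd' : (i + 1) / q = d := by rw [hd, Nat.mul_div_cancel_left d hq]
    have hle : d ≤ q * d := Nat.le_mul_of_pos_left d hq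
    have hcomm : d * q = q * d := mul_comm d q
    have hd1 : 1 ≤ d := Nat.pos_of_ne_zero (fun h => by simp [h] at hd)
    simp only [Finset.mem_filter, Finset.mem_Icc, hd']
    omega
  · intro j hj
    simp only [Finset.mem_filter, Finset.mem_Icc] at hj
    have h1 : 1 ≤ j := hj.1.1
    have h3 : 1 ≤ j * q := Nat.one_le_iff_ne_zero.mpr (Nat.mul_ne_zero (by omega) (by omega))
    show (j * q - 1 + 1) / q = j
    have h4 : j * q - 1 + 1 = j * q := by omega
    rw [h4, Nat.mul_div_cancel _ hq]
  · intro i hi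
    simp only [Finset.mem_filter, Finset.mem_range] at hi
    obtain ⟨hi1, d, hd⟩ := hi
    have hd' : (i + 1) / q = d := by rw [hd, Nat.mul_div_cancel_left d hq]
    have hcomm : d * q = q * d := mul_comm d q
    show (i + 1) / q * q - 1 = i
    rw [hd']
    omega
  · intro j hj
    simp only [Finset.mem_filter, Finset.mem_Icc] at hj
    rw [neg_one_pow_mul_sub_one hodd hj.1.1]

lemma roots_sum_eq {K : Type*} [Field K] {q : ℕ} (hq : 0 < q) (hodd : Odd q) {ξ : K}
    (hξ : IsPrimitiveRoot ξ q) (n : ℕ) :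
    ∑ ζ ∈ nthRootsFinset q (1 : K), ζ * (1 - ζ) ^ n
      = (q : K) * ∑ j ∈ Finset.Icc 1 (n + 1), (-1 : K) ^ (j - 1) * (n.choose (j * q - 1) : K) := by
  have expand : ∀ ζ : K, ζ * (1 - ζ) ^ n
      = ∑ i ∈ Finset.range (n + 1), (-1 : K) ^ i * (n.choose i : K) * ζ ^ (i + 1) := by
    intro ζ
    have h0 : (1 - ζ) ^ n = (-ζ + 1) ^ n := by ring_nf
    rw [h0, add_pow, Finset.mul_sum]
    refine Finset.sum_congr rfl fun i hi => ?_
    rw [neg_pow]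
    ring
  rw [Finset.sum_congr rfl (fun ζ _ => expand ζ), Finset.sum_comm]
  have hinner : ∀ i, ∑ ζ ∈ nthRootsFinset q (1 : K), (-1 : K) ^ i * (n.choose i : K) * ζ ^ (i + 1)
      = (-1 : K) ^ i * (n.choose i : K) * (if q ∣ (i + 1) then (q : K) else 0) := by
    intro i
    rw [← Finset.mul_sum, sum_pow_nthRoots hq hξ]
  rw [Finset.sum_congr rfl (fun i _ => hinner i)]
  have hsplit : ∑ i ∈ Finset.range (n + 1),
      (-1 : K) ^ i * (n.choose i : K) * (if q ∣ (i + 1) then (q : K) else 0)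
      = (q : K) * ∑ i ∈ (Finset.range (n + 1)).filter (fun i => q ∣ (i + 1)),
          ((-1 : K) ^ i * (n.choose i : K)) := by
    rw [Finset.mul_sum, Finset.sum_filter]
    refine Finset.sum_congr rfl fun i _ => ?_
    by_cases h : q ∣ (i + 1) <;> simp [h] <;> ring
  rw [hsplit, reindex_sum hq hodd]

/-- For `f` holomorphic on the arc `𝒜(a,b)` with coefficients `c` and any
path sequence `φ`, for every `k` in the domain of `φ`,
`A_{f,φ}(k) = - ∑_{n ≥ p^{φ(k)}-1} c_n (a-b)^{n+1} ∑_{j ≥ 1} (-1)^{j-1} C(n, j p^{φ(k)} - 1)`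
(the inner sum over `j` having only finitely many nonzero terms). -/

theorem stmt_0 (p : ℕ) [Fact (Nat.Prime p)] (hp2 : p ≠ 2)
    (K : Type*) [NormedField K] [CompleteSpace K] [IsAlgClosed K] [IsUltrametricDist K]
    [Algebra ℚ_[p] K] (hKext : ∀ q : ℚ_[p], ‖algebraMap ℚ_[p] K q‖ = ‖q‖)
    (a b : K) (hR : 0 < ‖a - b‖) (c : ℕ → K) (f : K → K)
    (hf : HolomorphicOn' K c b f (arc K a b)) (φ : PathSeq) (k : ℕ) (hk : φ.k₀ ≤ k) :
    Summable (fun n : {m : ℕ // p ^ φ.toFun k - 1 ≤ m} =>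
      c n * (a - b) ^ ((n : ℕ) + 1) *
        ∑ j ∈ Finset.Icc 1 ((n : ℕ) + 1),
          (-1 : K) ^ (j - 1) * ((n : ℕ).choose (j * p ^ φ.toFun k - 1) : K)) ∧
    Asum p K a b f (φ.toFun k) =
      -∑' n : {m : ℕ // p ^ φ.toFun k - 1 ≤ m},
        c n * (a - b) ^ ((n : ℕ) + 1) *
          ∑ j ∈ Finset.Icc 1 ((n : ℕ) + 1),
            (-1 : K) ^ (j - 1) * ((n : ℕ).choose (j * p ^ φ.toFun k - 1) : K) := by
  classical
  have hp : Nat.Prime p := Fact.out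
  set N := φ.toFun k with hNdef
  have hNpos : 0 < N := φ.pos k hk
  set q := p ^ N with hqdef
  have hq0 : 0 < q := pow_pos hp.pos N
  have hq1 : 1 < q := by
    calc 1 < p := hp.one_lt
      _ ≤ p ^ N := Nat.le_self_pow hNpos.ne' p
  have hodd : Odd q := (hp.odd_of_ne_two hp2).pow
  haveI : CharZero K := charZero_of_injective_algebraMap (algebraMap ℚ_[p] K).injective
  haveI : NeZero ((q : K)) := ⟨Nat.cast_ne_zero.mpr hq0.ne'⟩
  obtain ⟨ξ, hξ⟩ := HasEnoughRootsOfUnity.exists_primitiveRoot K q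
  have hpK : ‖(p : K)‖ = (p : ℝ)⁻¹ := by
    rw [show ((p : K)) = algebraMap ℚ_[p] K (p : ℚ_[p]) from (map_natCast _ p).symm, hKext,
      Padic.norm_p]
  have hpKne : ((p : K)) ^ N ≠ 0 := pow_ne_zero _ (Nat.cast_ne_zero.mpr hp.pos.ne')
  have hqK : ((q : ℕ) : K) = (p : K) ^ N := by rw [hqdef]; push_cast; ring
  have hqKne : ((q : ℕ) : K) ≠ 0 := Nat.cast_ne_zero.mpr hq0.ne'
  have hmem : ∀ ζ ∈ nthRootsFinset q (1 : K), ζ ^ q = 1 :=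
    fun ζ hζ => (Polynomial.mem_nthRootsFinset hq0 1).mp hζ
  have hmem' : ∀ ζ ∈ nthRootsFinset q (1 : K), ζ ^ (p ^ N) = 1 := by rw [← hqdef]; exact hmem
  have harc : ∀ ζ ∈ nthRootsFinset q (1 : K), a + (b - a) * ζ ∈ arc K a b := by
    intro ζ hζ
    show ‖(a + (b - a) * ζ) - b‖ < ‖a - b‖
    have hdiff : (a + (b - a) * ζ) - b = (a - b) * (1 - ζ) := by ring
    rw [hdiff, norm_mul]
    by_cases h1 : ζ = 1
    · simpa [h1] using hR
    · have h2 : ‖1 - ζ‖ < 1 := by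
        rw [norm_sub_rev]; exact norm_sub_one_lt hKext hNpos (hmem' ζ hζ) h1
      calc ‖a - b‖ * ‖1 - ζ‖ < ‖a - b‖ * 1 := mul_lt_mul_of_pos_left h2 hR
        _ = ‖a - b‖ := mul_one _
  -- the coefficient sums
  have key : ∀ n : ℕ, ∑ ζ ∈ nthRootsFinset q (1 : K), ζ * (1 - ζ) ^ n
      = (q : K) * ∑ j ∈ Finset.Icc 1 (n + 1), (-1 : K) ^ (j - 1) * ((n.choose (j * q - 1) : ℕ) : K) :=
    roots_sum_eq hq0 hodd hξ
  set T : ℕ → K := fun n => ∑ j ∈ Finset.Icc 1 (n + 1),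
    (-1 : K) ^ (j - 1) * ((n.choose (j * q - 1) : ℕ) : K) with hTdef
  set F : ℕ → K := fun n => c n * (a - b) ^ (n + 1) * T n with hFdef
  -- summability on each arc point
  have hsummζ : ∀ ζ ∈ nthRootsFinset q (1 : K), Summable (fun n => c n * ((a - b) * (1 - ζ)) ^ n) := by
    intro ζ hζ
    have h0 := (hf _ (harc ζ hζ)).1
    have heq : (fun n => c n * ((a + (b - a) * ζ) - b) ^ n)
        = fun n => c n * ((a - b) * (1 - ζ)) ^ n := by
      funext n; congr 2; ring
    rwa [heq] at h0
  -- the root ζ₀ with maximal distance from 1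
  have h1mem : (1 : K) ∈ nthRootsFinset q (1 : K) := Polynomial.one_mem_nthRootsFinset hq0
  have hne : ((nthRootsFinset q (1 : K)).erase 1).Nonempty := by
    rw [← Finset.card_pos, Finset.card_erase_of_mem h1mem, hξ.card_nthRootsFinset]; omega
  obtain ⟨ζ₀, hζ₀mem, hζ₀max⟩ :=
    Finset.exists_max_image ((nthRootsFinset q (1 : K)).erase 1) (fun ζ => ‖1 - ζ‖) hne
  have hζ₀roots : ζ₀ ∈ nthRootsFinset q (1 : K) := Finset.mem_of_mem_erase hζ₀mem
  have hζ₀ne : ζ₀ ≠ 1 := Finset.ne_of_mem_erase hζ₀mem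
  have hrlt : ‖1 - ζ₀‖ < 1 := by
    rw [norm_sub_rev]; exact norm_sub_one_lt hKext hNpos (hmem' _ hζ₀roots) hζ₀ne
  set x₀ : K := (a - b) * (1 - ζ₀) with hx₀def
  have hx₀arc : b + x₀ ∈ arc K a b := by
    show ‖b + x₀ - b‖ < ‖a - b‖
    rw [add_sub_cancel_left, hx₀def, norm_mul]
    calc ‖a - b‖ * ‖1 - ζ₀‖ < ‖a - b‖ * 1 := mul_lt_mul_of_pos_left hrlt hR
      _ = ‖a - b‖ := mul_one _
  have hsum₀ : Summable (fun n => c n * x₀ ^ n) := by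
    have h0 := (hf _ hx₀arc).1
    have heq : (fun n => c n * ((b + x₀) - b) ^ n) = fun n => c n * x₀ ^ n := by
      funext n; congr 2; ring
    rwa [heq] at h0
  have htend₀ : Tendsto (fun n => ‖c n * x₀ ^ n‖) atTop (nhds 0) :=
    tendsto_zero_iff_norm_tendsto_zero.mp hsum₀.tendsto_atTop_zero
  -- bound on T
  have hTbound : ∀ n : ℕ, 1 ≤ n → ‖T n‖ ≤ (p : ℝ) ^ N * ‖1 - ζ₀‖ ^ n := by
    intro n hn
    have hTeq : T n = ((q : K))⁻¹ * ∑ ζ ∈ nthRootsFinset q (1 : K), ζ * (1 - ζ) ^ n := by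
      rw [key n, ← mul_assoc, inv_mul_cancel₀ hqKne, one_mul]
    have hnq : ‖((q : ℕ) : K)‖ = ((p : ℝ))⁻¹ ^ N := by rw [hqK, norm_pow, hpK]
    have hSb : ‖∑ ζ ∈ nthRootsFinset q (1 : K), ζ * (1 - ζ) ^ n‖ ≤ ‖1 - ζ₀‖ ^ n := by
      refine IsUltrametricDist.norm_sum_le_of_forall_le_of_nonneg (by positivity) ?_
      intro ζ hζ
      by_cases h1 : ζ = 1
      · rw [h1]
        simp only [sub_self, zero_pow (by omega : n ≠ 0), mul_zero, norm_zero]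
        positivity
      · rw [norm_mul, norm_pow, norm_root_eq_one hq0 (hmem ζ hζ), one_mul]
        exact pow_le_pow_left₀ (norm_nonneg _) (hζ₀max ζ (Finset.mem_erase.mpr ⟨h1, hζ⟩)) n
    rw [hTeq, norm_mul, norm_inv, hnq]
    calc (((p : ℝ))⁻¹ ^ N)⁻¹ * ‖∑ ζ ∈ nthRootsFinset q (1 : K), ζ * (1 - ζ) ^ n‖
        ≤ (((p : ℝ))⁻¹ ^ N)⁻¹ * ‖1 - ζ₀‖ ^ n := by
          apply mul_le_mul_of_nonneg_left hSb (by positivity)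
      _ = (p : ℝ) ^ N * ‖1 - ζ₀‖ ^ n := by rw [← inv_pow, inv_inv]
  -- summability of F
  have hFnorm : ∀ n : ℕ, 1 ≤ n → ‖F n‖ ≤ (‖a - b‖ * (p : ℝ) ^ N) * ‖c n * x₀ ^ n‖ := by
    intro n hn
    have hxn : ‖c n * x₀ ^ n‖ = ‖c n‖ * (‖a - b‖ ^ n * ‖1 - ζ₀‖ ^ n) := by
      rw [hx₀def, norm_mul, norm_pow, norm_mul, mul_pow]
    have hFn : ‖F n‖ = ‖c n‖ * ‖a - b‖ ^ (n + 1) * ‖T n‖ := by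
      rw [hFdef]
      simp only [norm_mul, norm_pow]
    rw [hFn, hxn]
    calc ‖c n‖ * ‖a - b‖ ^ (n + 1) * ‖T n‖
        ≤ ‖c n‖ * ‖a - b‖ ^ (n + 1) * ((p : ℝ) ^ N * ‖1 - ζ₀‖ ^ n) :=
          mul_le_mul_of_nonneg_left (hTbound n hn) (by positivity)
      _ = (‖a - b‖ * (p : ℝ) ^ N) * (‖c n‖ * (‖a - b‖ ^ n * ‖1 - ζ₀‖ ^ n)) := by
          rw [pow_succ]; ring
  have hFtend : Tendsto F atTop (nhds 0) := by
    rw [tendsto_zero_iff_norm_tendsto_zero]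
    apply squeeze_zero' (Filter.Eventually.of_forall fun n => norm_nonneg _)
      (Filter.eventually_atTop.mpr ⟨1, fun n hn => hFnorm n hn⟩)
    simpa using htend₀.const_mul (‖a - b‖ * (p : ℝ) ^ N)
  have hFsummable : Summable F := by
    apply NonarchimedeanAddGroup.summable_of_tendsto_cofinite_zero
    rwa [Nat.cofinite_eq_atTop]
  -- computation of Asum
  have hAsum2 : Asum p K a b f N = -∑' n : ℕ, F n := by
    have h1 : ∀ ζ ∈ nthRootsFinset q (1 : K), (b - a) * ζ * f (a + (b - a) * ζ)
        = ∑' n : ℕ, (b - a) * ζ * (c n * ((a - b) * (1 - ζ)) ^ n) := by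
      intro ζ hζ
      have heq : (fun n => c n * ((a + (b - a) * ζ) - b) ^ n)
          = fun n => c n * ((a - b) * (1 - ζ)) ^ n := by
        funext n; congr 2; ring
      rw [(hf _ (harc ζ hζ)).2, heq, ← tsum_mul_left]
    have h2 : ∑ ζ ∈ nthRootsFinset q (1 : K),
          ∑' n : ℕ, (b - a) * ζ * (c n * ((a - b) * (1 - ζ)) ^ n)
        = ∑' n : ℕ, ∑ ζ ∈ nthRootsFinset q (1 : K), (b - a) * ζ * (c n * ((a - b) * (1 - ζ)) ^ n) :=
      (Summable.tsum_finsetSum (fun ζ hζ => (hsummζ ζ hζ).mul_left ((b - a) * ζ))).symm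
    have h3 : ∀ n : ℕ, ∑ ζ ∈ nthRootsFinset q (1 : K), (b - a) * ζ * (c n * ((a - b) * (1 - ζ)) ^ n)
        = (b - a) * c n * (a - b) ^ n * ((q : K) * T n) := by
      intro n
      calc ∑ ζ ∈ nthRootsFinset q (1 : K), (b - a) * ζ * (c n * ((a - b) * (1 - ζ)) ^ n)
          = (b - a) * c n * (a - b) ^ n * ∑ ζ ∈ nthRootsFinset q (1 : K), ζ * (1 - ζ) ^ n := by
            rw [Finset.mul_sum]
            refine Finset.sum_congr rfl fun ζ _ => ?_
            rw [mul_pow]; ring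
        _ = (b - a) * c n * (a - b) ^ n * ((q : K) * T n) := by rw [key n, hTdef]
    have h4 : ∀ n : ℕ, ((p : K) ^ N)⁻¹ * ((b - a) * c n * (a - b) ^ n * ((q : K) * T n))
        = -F n := by
      intro n
      rw [hqK, hFdef]
      calc ((p : K) ^ N)⁻¹ * ((b - a) * c n * (a - b) ^ n * ((p : K) ^ N * T n))
          = (((p : K) ^ N)⁻¹ * (p : K) ^ N) * ((b - a) * c n * (a - b) ^ n * T n) := by ring
        _ = -(c n * (a - b) ^ (n + 1) * T n) := by
            rw [inv_mul_cancel₀ hpKne, one_mul, pow_succ]; ring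
    calc Asum p K a b f N
        = ((p : K) ^ N)⁻¹ * ∑ ζ ∈ nthRootsFinset q (1 : K), (b - a) * ζ * f (a + (b - a) * ζ) := by
          rw [Asum, hqdef]
      _ = ((p : K) ^ N)⁻¹ * ∑' n : ℕ, ∑ ζ ∈ nthRootsFinset q (1 : K),
            (b - a) * ζ * (c n * ((a - b) * (1 - ζ)) ^ n) := by
          rw [Finset.sum_congr rfl h1, h2]
      _ = ∑' n : ℕ, ((p : K) ^ N)⁻¹ * ((b - a) * c n * (a - b) ^ n * ((q : K) * T n)) := by
          rw [← tsum_mul_left]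
          exact tsum_congr fun n => by rw [h3 n]
      _ = ∑' n : ℕ, -F n := tsum_congr fun n => h4 n
      _ = -∑' n : ℕ, F n := tsum_neg
  -- support of F
  have hsupp : Function.support F ⊆ {m : ℕ | q - 1 ≤ m} := by
    intro n hn
    simp only [Function.mem_support] at hn
    by_contra hlt
    simp only [Set.mem_setOf_eq, not_le] at hlt
    apply hn
    show c n * (a - b) ^ (n + 1) * T n = 0
    have hT0 : T n = 0 := by
      rw [hTdef]
      refine Finset.sum_eq_zero fun j hj => ?_
      simp only [Finset.mem_Icc] at hj
      have hqj : q ≤ j * q := Nat.le_mul_of_pos_left q hj.1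
      have : n < j * q - 1 := by omega
      rw [Nat.choose_eq_zero_of_lt this, Nat.cast_zero, mul_zero]
    rw [hT0, mul_zero]
  refine ⟨?_, ?_⟩
  · exact hFsummable.subtype {m : ℕ | q - 1 ≤ m}
  · calc Asum p K a b f N = -∑' n : ℕ, F n := hAsum2
      _ = -∑' n : {m : ℕ // q - 1 ≤ m}, F ↑n := by
          rw [← tsum_subtype_eq_of_support_subset hsupp]
          rfl
end

section
/- Let p be an odd prime, let a, b ∈ ℂ_p with R = |a − b|_p > 0, and let Φ be an interlocked family of path sequences. Suppose f_i (i = 1, 2, …) are holomorphic on 𝒜(a,b), each line integral ∫_{𝒜(a,b),Φ} f_i(x) dx exists, and f_i → f uniformly on 𝒜(a,b). Then f is holomorphic on 𝒜(a,b), the integral ∫_{𝒜(a,b),Φ} f(x) dx exists, and ∫_{𝒜(a,b),Φ} f(x) dx = lim_{i→∞} ∫_{𝒜(a,b),Φ} f_i(x) dx. -/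
/-!
Throughout, `K` plays the role of `ℂ_p`, the completion of an algebraic closure of `ℚ_p`:
it is a complete, algebraically closed, nonarchimedean (ultrametric) normed field equipped
with an isometric `ℚ_[p]`-algebra structure (hypothesis `hKext`).
-/

open scoped BigOperators

theorem aux_sum_pow_nthRoots {K : Type*} [Field K] [DecidableEq K] [IsAlgClosed K] [CharZero K] {m : ℕ}
    (hm : 0 < m) (j : ℕ) :
    ∑ ζ ∈ Polynomial.nthRootsFinset m (1 : K), ζ ^ j = if m ∣ j then (m : K) else 0 := by
  obtain ⟨ζ₀, hζ₀⟩ : ∃ ζ₀ : K, IsPrimitiveRoot ζ₀ m := by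
    obtain ⟨ζ, hζ⟩ := IsAlgClosed.exists_root (Polynomial.cyclotomic m K)
      (Polynomial.degree_cyclotomic_pos m K hm).ne'
    exact ⟨ζ, (Polynomial.isRoot_cyclotomic_iff_charZero hm).mp hζ⟩
  have hinj : ∀ i ∈ Finset.range m, ∀ j ∈ Finset.range m, ζ₀ ^ i = ζ₀ ^ j → i = j := by
    intro i hi j hj hij
    exact hζ₀.pow_inj (Finset.mem_range.mp hi) (Finset.mem_range.mp hj) hij
  have himg : Polynomial.nthRootsFinset m (1 : K) = (Finset.range m).image (ζ₀ ^ ·) := by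
    symm
    apply Finset.eq_of_subset_of_card_le
    · intro x hx
      simp only [Finset.mem_image, Finset.mem_range] at hx
      obtain ⟨i, _, rfl⟩ := hx
      rw [Polynomial.mem_nthRootsFinset hm, ← pow_mul, mul_comm, pow_mul, hζ₀.pow_eq_one, one_pow]
    · rw [hζ₀.card_nthRootsFinset, Finset.card_image_of_injOn hinj]
      simp
  rw [himg, Finset.sum_image hinj]
  have hrw : ∀ i, ((ζ₀ ^ ·) i) ^ j = (ζ₀ ^ j) ^ i := by
    intro i; simp only; rw [← pow_mul, mul_comm, pow_mul]
  simp only [hrw]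
  by_cases hdvd : m ∣ j
  · rw [if_pos hdvd]
    have h1 : ζ₀ ^ j = 1 := (hζ₀.pow_eq_one_iff_dvd j).mpr hdvd
    simp [h1]
  · rw [if_neg hdvd]
    have hne : ζ₀ ^ j ≠ 1 := fun h => hdvd ((hζ₀.pow_eq_one_iff_dvd j).mp h)
    rw [geom_sum_eq hne, ← pow_mul, mul_comm j m, pow_mul, hζ₀.pow_eq_one, one_pow]
    simp

theorem aux_norm_natCast_le_one {p : ℕ} [Fact p.Prime] {K : Type*} [NormedField K]
    [Algebra ℚ_[p] K] (hKext : ∀ q : ℚ_[p], ‖algebraMap ℚ_[p] K q‖ = ‖q‖) (n : ℕ) :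
    ‖(n : K)‖ ≤ 1 := by
  rw [← map_natCast (algebraMap ℚ_[p] K) n, hKext]
  have := Padic.norm_int_le_one (p := p) (n : ℤ)
  push_cast at this
  exact this

theorem aux_norm_p {p : ℕ} [Fact p.Prime] {K : Type*} [NormedField K]
    [Algebra ℚ_[p] K] (hKext : ∀ q : ℚ_[p], ‖algebraMap ℚ_[p] K q‖ = ‖q‖) :
    ‖(p : K)‖ = (p : ℝ)⁻¹ := by
  rw [← map_natCast (algebraMap ℚ_[p] K) p, hKext, Padic.norm_p]

theorem aux_norm_natCast_eq_one {p : ℕ} [Fact p.Prime] {K : Type*} [NormedField K]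
    [Algebra ℚ_[p] K] (hKext : ∀ q : ℚ_[p], ‖algebraMap ℚ_[p] K q‖ = ‖q‖) {m : ℕ}
    (hpm : ¬ p ∣ m) : ‖(m : K)‖ = 1 := by
  refine le_antisymm (aux_norm_natCast_le_one hKext m) ?_
  by_contra hlt
  push_neg at hlt
  rw [← map_natCast (algebraMap ℚ_[p] K) m, hKext] at hlt
  have : ‖((m : ℤ) : ℚ_[p])‖ < 1 := by push_cast; exact hlt
  rw [Padic.norm_intCast_lt_one_iff] at this
  exact hpm (Int.ofNat_dvd.mp this)

theorem aux_root_dist {p : ℕ} [Fact p.Prime] {K : Type*} [NormedField K] [IsUltrametricDist K]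
    [Algebra ℚ_[p] K] (hKext : ∀ q : ℚ_[p], ‖algebraMap ℚ_[p] K q‖ = ‖q‖) {N : ℕ}
    {ζ : K} (hζ : ζ ∈ Polynomial.nthRootsFinset (p ^ N) (1 : K)) : ‖1 - ζ‖ < 1 := by
  have hp : p.Prime := Fact.out
  have hM : 0 < p ^ N := pow_pos hp.pos N
  set M := p ^ N with hMdef
  have hpow : ζ ^ M = 1 := (Polynomial.mem_nthRootsFinset hM 1).mp hζ
  by_contra hcon
  push_neg at hcon
  rw [norm_sub_rev] at hcon
  set u := ζ - 1 with hu
  have hadd : (u + 1) ^ M = 1 := by rw [hu]; simpa using hpow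
  rw [add_pow] at hadd
  simp only [one_pow, mul_one] at hadd
  -- hadd : ∑ k in range (M+1), u ^ k * (M.choose k) = 1
  have h0mem : (0 : ℕ) ∈ Finset.range (M + 1) := by simp [hM]
  have hMmem : M ∈ (Finset.range (M + 1)).erase 0 := by
    simp [Finset.mem_erase, hM.ne']
  set s := ((Finset.range (M + 1)).erase 0).erase M with hs
  rw [← Finset.add_sum_erase _ _ h0mem, ← Finset.add_sum_erase _ _ hMmem] at hadd
  simp only [pow_zero, Nat.choose_zero_right, Nat.cast_one, one_mul, Nat.choose_self,
    mul_one] at hadd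
  have hkey : u ^ M = - ∑ k ∈ s, u ^ k * (M.choose k : K) := by
    linear_combination hadd
  have hnu : 1 ≤ ‖u‖ := hcon
  have hpinv : ‖(p : K)‖ = (p : ℝ)⁻¹ := by
    rw [← map_natCast (algebraMap ℚ_[p] K) p, hKext, Padic.norm_p]
  have hterm : ∀ k ∈ s, ‖u ^ k * (M.choose k : K)‖ ≤ (p : ℝ)⁻¹ * ‖u‖ ^ (M - 1) := by
    intro k hk
    have hk0 : k ≠ 0 := by
      rw [hs] at hk
      exact (Finset.mem_erase.mp (Finset.mem_erase.mp hk).2).1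
    have hkM : k ≠ M := (Finset.mem_erase.mp hk).1
    have hklt : k < M + 1 := by
      rw [hs] at hk
      exact Finset.mem_range.mp (Finset.mem_erase.mp (Finset.mem_erase.mp hk).2).2
    have hkle : k ≤ M - 1 := by omega
    obtain ⟨c, hc⟩ := hp.dvd_choose_pow hk0 hkM
    have hbin : ‖(M.choose k : K)‖ ≤ (p : ℝ)⁻¹ := by
      rw [hc]
      push_cast
      rw [norm_mul, hpinv]
      have hcle : ‖(c : K)‖ ≤ 1 := by
        rw [← map_natCast (algebraMap ℚ_[p] K) c, hKext]
        have := Padic.norm_int_le_one (p := p) (c : ℤ)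
        push_cast at this
        exact this
      calc (p : ℝ)⁻¹ * ‖(c : K)‖ ≤ (p : ℝ)⁻¹ * 1 := by
            apply mul_le_mul_of_nonneg_left hcle
            positivity
        _ = (p : ℝ)⁻¹ := mul_one _
    rw [norm_mul, norm_pow]
    calc ‖u‖ ^ k * ‖(M.choose k : K)‖ ≤ ‖u‖ ^ (M - 1) * (p : ℝ)⁻¹ := by
          apply mul_le_mul (pow_le_pow_right₀ hnu hkle) hbin (norm_nonneg _)
          positivity
      _ = (p : ℝ)⁻¹ * ‖u‖ ^ (M - 1) := mul_comm _ _
  have hsum : ‖∑ k ∈ s, u ^ k * (M.choose k : K)‖ ≤ (p : ℝ)⁻¹ * ‖u‖ ^ (M - 1) := by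
    apply IsUltrametricDist.norm_sum_le_of_forall_le_of_nonneg _ hterm
    positivity
  have hMnorm : ‖u‖ ^ M ≤ (p : ℝ)⁻¹ * ‖u‖ ^ (M - 1) := by
    rw [← norm_pow, hkey, norm_neg]
    exact hsum
  have hMsucc : M = (M - 1) + 1 := by omega
  rw [hMsucc, pow_succ] at hMnorm
  have hposu : (0 : ℝ) < ‖u‖ ^ (M - 1) := by positivity
  simp only [Nat.add_sub_cancel] at hMnorm
  have hule : ‖u‖ ≤ (p : ℝ)⁻¹ :=
    le_of_mul_le_mul_left (hMnorm.trans_eq (mul_comm _ _)) hposu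
  have hp2 : (2 : ℝ) ≤ (p : ℝ) := by exact_mod_cast hp.two_le
  have : (p : ℝ)⁻¹ < 1 := by
    rw [inv_lt_one_iff₀]
    right; linarith
  linarith

theorem aux_asum_bound {p : ℕ} [Fact p.Prime] {K : Type*} [NormedField K] [IsUltrametricDist K]
    [IsAlgClosed K] [CharZero K] [Algebra ℚ_[p] K]
    (hKext : ∀ q : ℚ_[p], ‖algebraMap ℚ_[p] K q‖ = ‖q‖)
    {a b : K} (hR : 0 < ‖a - b‖) (h : K → K) (d : ℕ → K)
    (hol : HolomorphicOn' K d b h (arc K a b)) {δ : ℝ} (hδ : 0 ≤ δ)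
    (hd : ∀ n, ‖d n‖ * ‖a - b‖ ^ n ≤ δ) (N : ℕ) :
    ‖Asum p K a b h N‖ ≤ ‖a - b‖ * δ := by
  classical
  have hp : p.Prime := Fact.out
  have hM : 0 < p ^ N := pow_pos hp.pos N
  have hpKne : ((p : K) ^ N) ≠ 0 :=
    pow_ne_zero _ (Nat.cast_ne_zero.mpr hp.ne_zero)
  have hxmem : ∀ ζ ∈ Polynomial.nthRootsFinset (p ^ N) (1 : K), (a + (b - a) * ζ) ∈ arc K a b := by
    intro ζ hζ
    show ‖a + (b - a) * ζ - b‖ < ‖a - b‖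
    have : a + (b - a) * ζ - b = (a - b) * (1 - ζ) := by ring
    rw [this, norm_mul]
    exact mul_lt_of_lt_one_right hR (aux_root_dist hKext hζ)
  have hptrw : ∀ ζ : K, a + (b - a) * ζ - b = (a - b) * (1 - ζ) := fun ζ => by ring
  have hval : ∀ ζ ∈ Polynomial.nthRootsFinset (p ^ N) (1 : K),
      h (a + (b - a) * ζ) = ∑' n : ℕ, d n * ((a - b) * (1 - ζ)) ^ n := by
    intro ζ hζ
    rw [(hol _ (hxmem ζ hζ)).2]
    apply tsum_congr
    intro n
    rw [hptrw ζ]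
  have hsummZ : ∀ ζ ∈ Polynomial.nthRootsFinset (p ^ N) (1 : K),
      Summable (fun n : ℕ => d n * ((a - b) * (1 - ζ)) ^ n) := by
    intro ζ hζ
    have := (hol _ (hxmem ζ hζ)).1
    simpa [hptrw ζ] using this
  set W : ℕ → K := fun n => ∑ j ∈ Finset.range (n + 1),
    if p ^ N ∣ (j + 1) then (-1) ^ j * (n.choose j : K) else 0 with hWdef
  have hW : ∀ n, ‖W n‖ ≤ 1 := by
    intro n
    apply IsUltrametricDist.norm_sum_le_of_forall_le_of_nonneg zero_le_one
    intro j _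
    split_ifs with hdvd
    · rw [norm_mul]
      have h1 : ‖(-1 : K) ^ j‖ = 1 := by
        rw [norm_pow, norm_neg, norm_one, one_pow]
      rw [h1, one_mul]
      exact aux_norm_natCast_le_one hKext _
    · simp
  have hG : ∀ n : ℕ, ∑ ζ ∈ Polynomial.nthRootsFinset (p ^ N) (1 : K), ζ * (1 - ζ) ^ n
      = (p : K) ^ N * W n := by
    intro n
    have hexp : ∀ ζ : K, ζ * (1 - ζ) ^ n
        = ∑ j ∈ Finset.range (n + 1), (-1) ^ j * (n.choose j : K) * ζ ^ (j + 1) := by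
      intro ζ
      have hb : (1 - ζ) ^ n = ∑ j ∈ Finset.range (n + 1), (-ζ) ^ j * (n.choose j : K) := by
        rw [sub_eq_add_neg, add_comm, add_pow]
        simp
      rw [hb, Finset.mul_sum]
      apply Finset.sum_congr rfl
      intro j _
      rw [neg_pow]
      ring
    simp_rw [hexp]
    rw [Finset.sum_comm]
    have hstep : ∀ j ∈ Finset.range (n + 1),
        ∑ ζ ∈ Polynomial.nthRootsFinset (p ^ N) (1 : K), (-1) ^ j * (n.choose j : K) * ζ ^ (j + 1)
        = (-1) ^ j * (n.choose j : K) * (if p ^ N ∣ (j + 1) then ((p ^ N : ℕ) : K) else 0) := by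
      intro j _
      rw [← Finset.mul_sum, aux_sum_pow_nthRoots hM (j + 1)]
    rw [Finset.sum_congr rfl hstep, hWdef, Finset.mul_sum]
    apply Finset.sum_congr rfl
    intro j _
    split_ifs with hdvd
    · push_cast
      ring
    · simp
  have hmain : Asum p K a b h N
      = ∑' n : ℕ, ((p : K) ^ N)⁻¹ * ((b - a) * d n * (a - b) ^ n * ((p : K) ^ N * W n)) := by
    have hsum1 : ∑ ζ ∈ Polynomial.nthRootsFinset (p ^ N) (1 : K), (b - a) * ζ * h (a + (b - a) * ζ)
        = ∑ ζ ∈ Polynomial.nthRootsFinset (p ^ N) (1 : K),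
            ∑' n : ℕ, (b - a) * ζ * (d n * ((a - b) * (1 - ζ)) ^ n) :=
      Finset.sum_congr rfl fun ζ hζ => by rw [hval ζ hζ, ← tsum_mul_left]
    rw [Asum, hsum1, ← Summable.tsum_finsetSum (fun ζ hζ => Summable.mul_left _ (hsummZ ζ hζ)),
      ← tsum_mul_left]
    apply tsum_congr
    intro n
    congr 1
    have hterm : ∀ ζ ∈ Polynomial.nthRootsFinset (p ^ N) (1 : K),
        (b - a) * ζ * (d n * ((a - b) * (1 - ζ)) ^ n)
        = (b - a) * d n * (a - b) ^ n * (ζ * (1 - ζ) ^ n) := by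
      intro ζ _
      rw [mul_pow]
      ring
    rw [Finset.sum_congr rfl hterm, ← Finset.mul_sum, hG n]
  have hcancel : ∀ n : ℕ, ((p : K) ^ N)⁻¹ * ((b - a) * d n * (a - b) ^ n * ((p : K) ^ N * W n))
      = (b - a) * d n * (a - b) ^ n * W n := by
    intro n
    field_simp
  rw [hmain, tsum_congr hcancel]
  apply IsUltrametricDist.norm_tsum_le_of_forall_le_of_nonneg (by positivity)
  intro n
  rw [norm_mul, norm_mul, norm_mul, norm_pow, norm_sub_rev b a]
  calc ‖a - b‖ * ‖d n‖ * ‖a - b‖ ^ n * ‖W n‖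
      ≤ ‖a - b‖ * ‖d n‖ * ‖a - b‖ ^ n * 1 := by
        apply mul_le_mul_of_nonneg_left (hW n); positivity
    _ = ‖a - b‖ * (‖d n‖ * ‖a - b‖ ^ n) := by ring
    _ ≤ ‖a - b‖ * δ := by
        apply mul_le_mul_of_nonneg_left (hd n) (norm_nonneg _)

theorem aux_exists_norm_btwn {p : ℕ} [Fact p.Prime] {K : Type*} [NormedField K]
    [IsAlgClosed K] [Algebra ℚ_[p] K]
    (hKext : ∀ q : ℚ_[p], ‖algebraMap ℚ_[p] K q‖ = ‖q‖)
    {r R' : ℝ} (hr : 0 < r) (hrR : r < R') :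
    ∃ t : K, t ≠ 0 ∧ r ≤ ‖t‖ ∧ ‖t‖ < R' := by
  have hp : p.Prime := Fact.out
  have hp1 : (1 : ℝ) < p := by exact_mod_cast hp.one_lt
  have hq : (1 : ℝ) < R' / r := (one_lt_div hr).mpr hrR
  obtain ⟨m, hm⟩ := pow_unbounded_of_one_lt (p : ℝ) hq
  have hm0 : 0 < m := by
    rcases Nat.eq_zero_or_pos m with h | h
    · exfalso; rw [h, pow_zero] at hm; linarith
    · exact h
  obtain ⟨n, hn⟩ := exists_mem_Ioc_zpow (show (0:ℝ) < r ^ m by positivity) hp1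
  obtain ⟨t, ht⟩ := IsAlgClosed.exists_pow_nat_eq ((p : K) ^ (-(n + 1)) : K) hm0
  have hpKne : (p : K) ≠ 0 := by
    intro hcon
    have : ‖(p : K)‖ = 0 := by rw [hcon, norm_zero]
    rw [aux_norm_p hKext] at this
    have : (0:ℝ) < (p:ℝ)⁻¹ := by positivity
    linarith
  have hnormt : ‖t‖ ^ m = (p : ℝ) ^ (n + 1) := by
    rw [← norm_pow, ht, norm_zpow, aux_norm_p hKext, inv_zpow, ← zpow_neg, neg_neg]
  have ht0 : t ≠ 0 := by
    intro hcon
    rw [hcon, norm_zero] at hnormt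
    have h1 : (0:ℝ) < (p:ℝ) ^ (n+1) := by positivity
    rw [zero_pow hm0.ne'] at hnormt
    linarith
  have h1 : r ^ m ≤ ‖t‖ ^ m := by rw [hnormt]; exact hn.2
  have h2 : ‖t‖ ^ m < R' ^ m := by
    rw [hnormt, zpow_add_one₀ (by positivity : (p:ℝ) ≠ 0)]
    calc (p : ℝ) ^ n * p < r ^ m * (R' / r) ^ m := by
          apply mul_lt_mul'' hn.1 hm (by positivity) (by linarith)
      _ = R' ^ m := by
          rw [div_pow, mul_div_assoc']
          field_simp
  refine ⟨t, ht0, ?_, ?_⟩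
  · by_contra hcon
    push_neg at hcon
    have := pow_lt_pow_left₀ hcon (norm_nonneg t) hm0.ne'
    linarith
  · by_contra hcon
    push_neg at hcon
    have hR0 : (0:ℝ) ≤ R' := by linarith
    have := pow_le_pow_left₀ hR0 hcon m
    linarith

theorem aux_norm_root_one {K : Type*} [NormedField K] {ζ : K} {m : ℕ} (hm : 0 < m)
    (hζ : ζ ^ m = 1) : ‖ζ‖ = 1 := by
  have h : ‖ζ‖ ^ m = 1 := by rw [← norm_pow, hζ, norm_one]
  rcases lt_trichotomy ‖ζ‖ 1 with hlt | heq | hgt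
  · exfalso
    have := pow_lt_one₀ (norm_nonneg ζ) hlt hm.ne'
    linarith
  · exact heq
  · exfalso
    have := one_lt_pow₀ hgt hm.ne'
    linarith

theorem aux_coeff_bound {p : ℕ} [Fact p.Prime] {K : Type*} [NormedField K] [IsUltrametricDist K]
    [IsAlgClosed K] [CharZero K] [Algebra ℚ_[p] K]
    (hKext : ∀ q : ℚ_[p], ‖algebraMap ℚ_[p] K q‖ = ‖q‖)
    {a b : K} (hR : 0 < ‖a - b‖) (d : ℕ → K)
    (hsum : ∀ x ∈ arc K a b, Summable fun n : ℕ => d n * (x - b) ^ n)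
    {δ : ℝ} (hδ : 0 ≤ δ) (hbnd : ∀ x ∈ arc K a b, ‖∑' n : ℕ, d n * (x - b) ^ n‖ ≤ δ)
    (n : ℕ) : ‖d n‖ * ‖a - b‖ ^ n ≤ δ := by
  classical
  have hp : p.Prime := Fact.out
  -- main subclaim at a point t
  have subclaim : ∀ t : K, t ≠ 0 → ‖t‖ < ‖a - b‖ → ‖d n‖ * ‖t‖ ^ n ≤ δ := by
    intro t ht0 htR
    have hr0 : 0 < ‖t‖ := norm_pos_iff.mpr ht0
    apply le_of_forall_pos_le_add
    intro η hη
    -- terms tend to zero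
    have hmemt : (b + t) ∈ arc K a b := by
      show ‖b + t - b‖ < ‖a - b‖
      simpa using htR
    have hsx : Summable (fun k : ℕ => d k * t ^ k) := by
      have := hsum (b + t) hmemt
      simpa using this
    have hten : Filter.Tendsto (fun k : ℕ => ‖d k * t ^ k‖) Filter.atTop (nhds 0) := by
      have := hsx.tendsto_atTop_zero.norm
      simpa using this
    obtain ⟨M, hM⟩ := (Metric.tendsto_atTop.mp hten η hη)
    have hMspec : ∀ k, M ≤ k → ‖d k * t ^ k‖ < η := by
      intro k hk
      have := hM k hk
      rw [Real.dist_eq, sub_zero, abs_of_nonneg (norm_nonneg _)] at this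
      exact this
    -- choose a modulus m
    set m : ℕ := p * (M + n + 1) + 1 with hmdef
    have hm0 : 0 < m := by positivity
    have hpm : ¬ p ∣ m := by
      intro hcon
      have h1 : p ∣ 1 := (Nat.dvd_add_right ⟨M + n + 1, rfl⟩).mp hcon
      exact hp.one_lt.ne' (Nat.dvd_one.mp h1)
    have hnm : n < m := by
      have : 2 ≤ p := hp.two_le
      nlinarith
    have hMm : M ≤ m := by
      have : 2 ≤ p := hp.two_le
      nlinarith
    -- roots of unity points
    have hζnorm : ∀ ζ ∈ Polynomial.nthRootsFinset m (1 : K), ‖ζ‖ = 1 := fun ζ hζ =>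
      aux_norm_root_one hm0 ((Polynomial.mem_nthRootsFinset hm0 1).mp hζ)
    have hmemζ : ∀ ζ ∈ Polynomial.nthRootsFinset m (1 : K), (b + t * ζ) ∈ arc K a b := by
      intro ζ hζ
      show ‖b + t * ζ - b‖ < ‖a - b‖
      have : b + t * ζ - b = t * ζ := by ring
      rw [this, norm_mul, hζnorm ζ hζ, mul_one]
      exact htR
    have hsumζ : ∀ ζ ∈ Polynomial.nthRootsFinset m (1 : K),
        Summable (fun k : ℕ => ζ ^ (m - n) * (d k * (t * ζ) ^ k)) := by
      intro ζ hζ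
      apply Summable.mul_left
      have := hsum (b + t * ζ) (hmemζ ζ hζ)
      simpa [add_sub_cancel_left] using this
    -- the averaged sum
    set w : ℕ → K := fun k => d k * t ^ k * (if m ∣ (m - n + k) then (m : K) else 0) with hwdef
    have hptk : ∀ k : ℕ, ∑ ζ ∈ Polynomial.nthRootsFinset m (1 : K),
        ζ ^ (m - n) * (d k * (t * ζ) ^ k) = w k := by
      intro k
      have hterm : ∀ ζ ∈ Polynomial.nthRootsFinset m (1 : K),
          ζ ^ (m - n) * (d k * (t * ζ) ^ k) = d k * t ^ k * ζ ^ (m - n + k) := by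
        intro ζ _
        rw [pow_add, mul_pow]
        ring
      rw [Finset.sum_congr rfl hterm, ← Finset.mul_sum, aux_sum_pow_nthRoots hm0 (m - n + k)]
    have hswap : ∑ ζ ∈ Polynomial.nthRootsFinset m (1 : K),
        ∑' k : ℕ, ζ ^ (m - n) * (d k * (t * ζ) ^ k) = ∑' k : ℕ, w k := by
      rw [← Summable.tsum_finsetSum hsumζ]
      exact tsum_congr hptk
    have hwsummable : Summable w := (summable_sum hsumζ).congr hptk
    have hwn : w n = d n * t ^ n * (m : K) := by
      rw [hwdef]
      simp only
      rw [if_pos ⟨1, by omega⟩]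
    have hT : ‖∑' k : ℕ, w k‖ ≤ δ := by
      rw [← hswap]
      apply IsUltrametricDist.norm_sum_le_of_forall_le_of_nonneg hδ
      intro ζ hζ
      rw [tsum_mul_left, norm_mul, norm_pow, hζnorm ζ hζ, one_pow, one_mul]
      have := hbnd (b + t * ζ) (hmemζ ζ hζ)
      simpa [add_sub_cancel_left] using this
    have hsplit := Summable.tsum_eq_add_tsum_ite hwsummable n
    have htail : ‖∑' k : ℕ, (if k = n then 0 else w k)‖ ≤ η := by
      apply IsUltrametricDist.norm_tsum_le_of_forall_le_of_nonneg hη.le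
      intro k
      split_ifs with hk
      · simpa using hη.le
      · rw [hwdef]
        simp only
        split_ifs with hdvd
        · obtain ⟨s, hs⟩ := hdvd
          have hk2 : n + m ≤ k := by
            rcases Nat.lt_or_ge s 2 with hs2 | hs2
            · interval_cases s <;> omega
            · have h2m : m * 2 ≤ m * s := Nat.mul_le_mul_left m hs2
              omega
          have hkM : M ≤ k := by omega
          rw [norm_mul, aux_norm_natCast_eq_one hKext hpm, mul_one]
          exact (hMspec k hkM).le
        · simpa using hη.le
    have hwnval : ‖w n‖ = ‖d n‖ * ‖t‖ ^ n := by
      rw [hwn, norm_mul, aux_norm_natCast_eq_one hKext hpm, mul_one, norm_mul, norm_pow]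
    have hwsub : w n = (∑' k : ℕ, w k) - ∑' k : ℕ, (if k = n then 0 else w k) := by
      rw [hsplit]
      ring
    calc ‖d n‖ * ‖t‖ ^ n = ‖w n‖ := hwnval.symm
      _ = ‖(∑' k : ℕ, w k) - ∑' k : ℕ, (if k = n then 0 else w k)‖ := by rw [← hwsub]
      _ ≤ ‖∑' k : ℕ, w k‖ + ‖∑' k : ℕ, (if k = n then 0 else w k)‖ := norm_sub_le _ _
      _ ≤ δ + η := add_le_add hT htail
  -- pass to the limit r → R
  have htend : Filter.Tendsto (fun r : ℝ => ‖d n‖ * r ^ n)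
      (nhdsWithin ‖a - b‖ (Set.Iio ‖a - b‖)) (nhds (‖d n‖ * ‖a - b‖ ^ n)) := by
    apply Filter.Tendsto.mono_left _ nhdsWithin_le_nhds
    exact Continuous.tendsto (by continuity) _
  apply le_of_tendsto htend
  filter_upwards [Ioo_mem_nhdsLT_of_mem
    (show ‖a - b‖ ∈ Set.Ioc (0:ℝ) ‖a - b‖ from ⟨hR, le_refl _⟩)] with r hrmem
  obtain ⟨t, ht0, htr, htR⟩ := aux_exists_norm_btwn hKext hrmem.1 hrmem.2
  calc ‖d n‖ * r ^ n ≤ ‖d n‖ * ‖t‖ ^ n := by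
        apply mul_le_mul_of_nonneg_left (pow_le_pow_left₀ hrmem.1.le htr n) (norm_nonneg _)
    _ ≤ δ := subclaim t ht0 htR

theorem aux_summable_of_norm_tendsto_zero {K : Type*} [NormedAddCommGroup K]
    [IsUltrametricDist K] [CompleteSpace K] {f : ℕ → K}
    (h : Filter.Tendsto (fun n => ‖f n‖) Filter.atTop (nhds 0)) : Summable f := by
  rw [summable_iff_vanishing]
  intro e he
  obtain ⟨ε, hε, hball⟩ := Metric.mem_nhds_iff.mp he
  obtain ⟨M, hM⟩ := Metric.tendsto_atTop.mp h (ε / 2) (by positivity)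
  refine ⟨Finset.range M, fun s hs => ?_⟩
  apply hball
  rw [Metric.mem_ball, dist_zero_right]
  have hbd : ‖∑ i ∈ s, f i‖ ≤ ε / 2 := by
    apply IsUltrametricDist.norm_sum_le_of_forall_le_of_nonneg (by positivity)
    intro i hi
    have hiM : M ≤ i := by
      by_contra hcon
      push_neg at hcon
      exact (Finset.disjoint_left.mp hs hi) (Finset.mem_range.mpr hcon)
    have := hM i hiM
    rw [Real.dist_eq, sub_zero, abs_of_nonneg (norm_nonneg _)] at this
    exact this.le
  linarith

theorem aux_asum_sub {p : ℕ} {K : Type*} [NormedField K] (a b : K) (f g : K → K) (N : ℕ) :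
    Asum p K a b f N - Asum p K a b g N = Asum p K a b (fun x => f x - g x) N := by
  rw [Asum, Asum, Asum, ← mul_sub, ← Finset.sum_sub_distrib]
  congr 1
  apply Finset.sum_congr rfl
  intro ζ _
  ring

/-- If the `f i` are holomorphic on `𝒜(a,b)`, each has a line integral
`I i` with respect to the interlocked family `Φ`, and `f i → g` uniformly on `𝒜(a,b)`,
then `g` is holomorphic on `𝒜(a,b)`, its integral exists, and it equals `lim I i`. -/
theorem stmt_2 (p : ℕ) [Fact (Nat.Prime p)] (hp2 : p ≠ 2)
    (K : Type*) [NormedField K] [CompleteSpace K] [IsAlgClosed K] [IsUltrametricDist K]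
    [Algebra ℚ_[p] K] (hKext : ∀ q : ℚ_[p], ‖algebraMap ℚ_[p] K q‖ = ‖q‖)
    (a b : K) (hR : 0 < ‖a - b‖) (Φ : Set PathSeq) (hΦ : Interlocked Φ)
    (f : ℕ → K → K) (c : ℕ → ℕ → K)
    (hf : ∀ i : ℕ, HolomorphicOn' K (c i) b (f i) (arc K a b))
    (I : ℕ → K) (hI : ∀ i : ℕ, HasIntegral p K a b (f i) Φ (I i))
    (g : K → K) (hconv : TendstoUniformlyOn f g Filter.atTop (arc K a b)) :
    (∃ c' : ℕ → K, HolomorphicOn' K c' b g (arc K a b)) ∧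
    ∃ L : K, Filter.Tendsto I Filter.atTop (nhds L) ∧ HasIntegral p K a b g Φ L := by
    classical
  have hcz : CharZero K := charZero_of_injective_algebraMap (algebraMap ℚ_[p] K).injective
  set R := ‖a - b‖ with hRdef
  have hR1 : 0 < R + 1 := by positivity
  -- uniform Cauchy property of (f i) on the arc
  have hUC : ∀ ε : ℝ, 0 < ε → ∃ M : ℕ, ∀ i j, M ≤ i → M ≤ j →
      ∀ x ∈ arc K a b, ‖f i x - f j x‖ ≤ ε := by
    intro ε hε
    obtain ⟨M, hM⟩ := Filter.eventually_atTop.mp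
      (Metric.tendstoUniformlyOn_iff.mp hconv (ε / 2) (by positivity))
    refine ⟨M, fun i j hi hj x hx => ?_⟩
    have h1 := hM i hi x hx
    have h2 := hM j hj x hx
    rw [dist_eq_norm] at h1 h2
    calc ‖f i x - f j x‖ = ‖(g x - f j x) - (g x - f i x)‖ := by
          congr 1; ring
      _ ≤ ‖g x - f j x‖ + ‖g x - f i x‖ := norm_sub_le _ _
      _ ≤ ε := by linarith
  -- uniform closeness of g and f i
  have hUg : ∀ ε : ℝ, 0 < ε → ∃ M : ℕ, ∀ i, M ≤ i →
      ∀ x ∈ arc K a b, ‖g x - f i x‖ ≤ ε := by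
    intro ε hε
    obtain ⟨M, hM⟩ := Filter.eventually_atTop.mp
      (Metric.tendstoUniformlyOn_iff.mp hconv ε hε)
    refine ⟨M, fun i hi x hx => ?_⟩
    have h1 := hM i hi x hx
    rw [dist_eq_norm] at h1
    exact h1.le
  -- coefficient estimate for differences f i - f j
  have hcij : ∀ (i j : ℕ) (ε : ℝ), 0 < ε → (∀ x ∈ arc K a b, ‖f i x - f j x‖ ≤ ε) →
      ∀ n, ‖c i n - c j n‖ * R ^ n ≤ ε := by
    intro i j ε hε hb n
    apply aux_coeff_bound hKext hR (fun n => c i n - c j n) ?_ hε.le ?_ n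
    · intro x hx
      exact (((hf i x hx).1.sub ((hf j x hx).1)).congr (fun n => by ring))
    · intro x hx
      have hveq : ∑' n : ℕ, (c i n - c j n) * (x - b) ^ n = f i x - f j x := by
        rw [(hf i x hx).2, (hf j x hx).2, ← Summable.tsum_sub (hf i x hx).1 (hf j x hx).1]
        exact tsum_congr fun n => by ring
      rw [hveq]
      exact hb x hx
  have hcoef : ∀ ε : ℝ, 0 < ε → ∃ M : ℕ, ∀ i j, M ≤ i → M ≤ j →
      ∀ n, ‖c i n - c j n‖ * R ^ n ≤ ε := by
    intro ε hε
    obtain ⟨M, hM⟩ := hUC ε hε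
    exact ⟨M, fun i j hi hj => hcij i j ε hε (hM i j hi hj)⟩
  -- limit coefficients
  have hcauchyc : ∀ n : ℕ, ∃ cl : K, Filter.Tendsto (fun i => c i n) Filter.atTop (nhds cl) := by
    intro n
    apply cauchySeq_tendsto_of_complete
    rw [Metric.cauchySeq_iff]
    intro ε hε
    have hpow : (0:ℝ) < R ^ n := by positivity
    obtain ⟨M, hM⟩ := hcoef (ε / 2 * R ^ n) (by positivity)
    refine ⟨M, fun i hi j hj => ?_⟩
    rw [dist_eq_norm]
    have h1 := hM i j hi hj n
    have h2 : ‖c i n - c j n‖ ≤ ε / 2 := (mul_le_mul_iff_of_pos_right hpow).mp h1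
    linarith
  choose c' hc' using hcauchyc
  -- uniform coefficient bound against the limit coefficients
  have hc'bnd : ∀ ε : ℝ, 0 < ε → ∃ M : ℕ, ∀ i, M ≤ i →
      ∀ n, ‖c' n - c i n‖ * R ^ n ≤ ε := by
    intro ε hε
    obtain ⟨M, hM⟩ := hcoef ε hε
    refine ⟨M, fun i hi n => ?_⟩
    have htendn : Filter.Tendsto (fun j => ‖c j n - c i n‖ * R ^ n) Filter.atTop
        (nhds (‖c' n - c i n‖ * R ^ n)) :=
      (((hc' n).sub_const _).norm).mul_const _
    apply le_of_tendsto htendn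
    filter_upwards [Filter.eventually_ge_atTop M] with j hj
    exact hM j i hj hi n
  -- g is holomorphic with coefficients c'
  have hgsum : ∀ x ∈ arc K a b, Summable fun n : ℕ => c' n * (x - b) ^ n := by
    intro x hx
    have hx' : ‖x - b‖ < R := hx
    apply aux_summable_of_norm_tendsto_zero
    rw [Metric.tendsto_atTop]
    intro ε hε
    obtain ⟨M, hM⟩ := hc'bnd (ε / 2) (by positivity)
    have h2 : Filter.Tendsto (fun n => ‖c M n * (x - b) ^ n‖) Filter.atTop (nhds 0) := by
      have := ((hf M x hx).1.tendsto_atTop_zero).norm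
      simpa using this
    obtain ⟨N₀, hN₀⟩ := Metric.tendsto_atTop.mp h2 (ε / 2) (by positivity)
    refine ⟨N₀, fun n hn => ?_⟩
    rw [Real.dist_eq, sub_zero, abs_of_nonneg (norm_nonneg _)]
    have hsplit : c' n * (x - b) ^ n = (c' n - c M n) * (x - b) ^ n + c M n * (x - b) ^ n := by
      ring
    have hb1 : ‖(c' n - c M n) * (x - b) ^ n‖ ≤ ε / 2 := by
      rw [norm_mul, norm_pow]
      calc ‖c' n - c M n‖ * ‖x - b‖ ^ n ≤ ‖c' n - c M n‖ * R ^ n := by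
            apply mul_le_mul_of_nonneg_left
              (pow_le_pow_left₀ (norm_nonneg _) hx'.le n) (norm_nonneg _)
        _ ≤ ε / 2 := hM M le_rfl n
    have hb2 : ‖c M n * (x - b) ^ n‖ < ε / 2 := by
      have := hN₀ n hn
      rwa [Real.dist_eq, sub_zero, abs_of_nonneg (norm_nonneg _)] at this
    calc ‖c' n * (x - b) ^ n‖
        = ‖(c' n - c M n) * (x - b) ^ n + c M n * (x - b) ^ n‖ := by rw [← hsplit]
      _ ≤ ‖(c' n - c M n) * (x - b) ^ n‖ + ‖c M n * (x - b) ^ n‖ := norm_add_le _ _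
      _ < ε := by linarith
  have hgval : ∀ x ∈ arc K a b, g x = ∑' n : ℕ, c' n * (x - b) ^ n := by
    intro x hx
    have hx' : ‖x - b‖ < R := hx
    have hsmall : ∀ ε : ℝ, 0 < ε → ‖g x - ∑' n : ℕ, c' n * (x - b) ^ n‖ ≤ ε := by
      intro ε hε
      obtain ⟨M₁, hM₁⟩ := hc'bnd (ε / 2) (by positivity)
      obtain ⟨M₂, hM₂⟩ := hUg (ε / 2) (by positivity)
      set i := max M₁ M₂ with hidef
      have hd1 : ‖g x - f i x‖ ≤ ε / 2 := hM₂ i (le_max_right _ _) x hx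
      have hd2 : ‖f i x - ∑' n : ℕ, c' n * (x - b) ^ n‖ ≤ ε / 2 := by
        rw [(hf i x hx).2, ← Summable.tsum_sub (hf i x hx).1 (hgsum x hx)]
        apply IsUltrametricDist.norm_tsum_le_of_forall_le_of_nonneg (by positivity)
        intro n
        have heq : c i n * (x - b) ^ n - c' n * (x - b) ^ n = (c i n - c' n) * (x - b) ^ n := by
          ring
        rw [heq, norm_mul, norm_pow]
        calc ‖c i n - c' n‖ * ‖x - b‖ ^ n ≤ ‖c i n - c' n‖ * R ^ n := by
              apply mul_le_mul_of_nonneg_left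
                (pow_le_pow_left₀ (norm_nonneg _) hx'.le n) (norm_nonneg _)
          _ = ‖c' n - c i n‖ * R ^ n := by rw [norm_sub_rev]
          _ ≤ ε / 2 := hM₁ i (le_max_left _ _) n
      calc ‖g x - ∑' n : ℕ, c' n * (x - b) ^ n‖
          = ‖(g x - f i x) + (f i x - ∑' n : ℕ, c' n * (x - b) ^ n)‖ := by
            congr 1; ring
        _ ≤ ‖g x - f i x‖ + ‖f i x - ∑' n : ℕ, c' n * (x - b) ^ n‖ := norm_add_le _ _
        _ ≤ ε := by linarith
    have h0 : ‖g x - ∑' n : ℕ, c' n * (x - b) ^ n‖ ≤ 0 :=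
      le_of_forall_pos_le_add (by simpa using hsmall)
    exact sub_eq_zero.mp (norm_le_zero_iff.mp h0)
  have hgHol : HolomorphicOn' K c' b g (arc K a b) := fun x hx => ⟨hgsum x hx, hgval x hx⟩
  -- key comparison of Riemann sums
  have hkey : ∀ (h₁ h₂ : K → K) (d₁ d₂ : ℕ → K),
      HolomorphicOn' K d₁ b h₁ (arc K a b) → HolomorphicOn' K d₂ b h₂ (arc K a b) →
      ∀ {ε : ℝ}, 0 ≤ ε → (∀ n, ‖d₁ n - d₂ n‖ * R ^ n ≤ ε) →
      ∀ N, ‖Asum p K a b h₁ N - Asum p K a b h₂ N‖ ≤ R * ε := by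
    intro h₁ h₂ d₁ d₂ hol₁ hol₂ ε hε hd N
    rw [aux_asum_sub]
    apply aux_asum_bound hKext hR _ (fun n => d₁ n - d₂ n) ?_ hε hd N
    intro x hx
    constructor
    · exact (((hol₁ x hx).1.sub ((hol₂ x hx).1)).congr (fun n => by ring))
    · show h₁ x - h₂ x = ∑' n : ℕ, (d₁ n - d₂ n) * (x - b) ^ n
      rw [(hol₁ x hx).2, (hol₂ x hx).2, ← Summable.tsum_sub (hol₁ x hx).1 (hol₂ x hx).1]
      exact tsum_congr fun n => by ring
  -- growth of subsequence index maps
  have hgrow : ∀ (k₀ : ℕ) (σ : ℕ → ℕ), (∀ k l, k₀ ≤ k → k < l → σ k < σ l) →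
      ∀ k, k₀ ≤ k → k - k₀ ≤ σ k := by
    intro k₀ σ hσ k hk
    have haux : ∀ d : ℕ, d ≤ σ (k₀ + d) := by
      intro d
      induction d with
      | zero => exact Nat.zero_le _
      | succ d ih =>
        have := hσ (k₀ + d) (k₀ + d + 1) (by omega) (by omega)
        rw [← add_assoc]
        omega
    have := haux (k - k₀)
    rwa [Nat.add_sub_cancel' hk] at this
  -- the sequence of integrals is Cauchy
  have hIcauchy : CauchySeq I := by
    rw [Metric.cauchySeq_iff]
    intro ε hε
    set ε' : ℝ := ε / (2 * (R + 1)) with hε'def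
    have hε'pos : 0 < ε' := by positivity
    obtain ⟨M, hM⟩ := hUC ε' hε'pos
    refine ⟨M, fun i hi j hj => ?_⟩
    rw [dist_eq_norm]
    have hdc : ∀ n, ‖c i n - c j n‖ * R ^ n ≤ ε' := hcij i j ε' hε'pos (hM i j hi hj)
    have hstep : ∀ η : ℝ, 0 < η → ‖I i - I j‖ ≤ R * ε' + η := by
      intro η hη
      have hη2 : 0 < η / 2 := by positivity
      obtain ⟨φ₁, hφ₁Φ, M₁, hM₁k, hM₁⟩ := hI i (η / 2) hη2
      obtain ⟨φ₂, hφ₂Φ, M₂, hM₂k, hM₂⟩ := hI j (η / 2) hη2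
      obtain ⟨φ₃, hφ₃Φ, k₀, hk₀pos, hsub₁, hsub₂⟩ := hΦ.2 φ₁ hφ₁Φ φ₂ hφ₂Φ
      obtain ⟨σ₁, hσ₁mono, hσ₁spec⟩ := hsub₁
      obtain ⟨σ₂, hσ₂mono, hσ₂spec⟩ := hsub₂
      set k : ℕ := k₀ + M₁ + M₂ + 1 with hkdef
      have hkk₀ : k₀ ≤ k := by omega
      have hk1 : M₁ < σ₁ k := by
        have := hgrow k₀ σ₁ hσ₁mono k hkk₀
        omega
      have hk2 : M₂ < σ₂ k := by
        have := hgrow k₀ σ₂ hσ₂mono k hkk₀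
        omega
      have e₁ : ‖Asum p K a b (f i) (φ₃.toFun k) - I i‖ < η / 2 := by
        rw [(hσ₁spec k hkk₀).2]
        exact hM₁ (σ₁ k) hk1
      have e₂ : ‖Asum p K a b (f j) (φ₃.toFun k) - I j‖ < η / 2 := by
        rw [(hσ₂spec k hkk₀).2]
        exact hM₂ (σ₂ k) hk2
      have e₃ : ‖Asum p K a b (f i) (φ₃.toFun k) - Asum p K a b (f j) (φ₃.toFun k)‖ ≤ R * ε' :=
        hkey (f i) (f j) (c i) (c j) (hf i) (hf j) hε'pos.le hdc _
      calc ‖I i - I j‖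
          = ‖(I i - Asum p K a b (f i) (φ₃.toFun k))
              + ((Asum p K a b (f i) (φ₃.toFun k) - Asum p K a b (f j) (φ₃.toFun k))
              + (Asum p K a b (f j) (φ₃.toFun k) - I j))‖ := by
            congr 1; ring
        _ ≤ ‖I i - Asum p K a b (f i) (φ₃.toFun k)‖
              + (‖Asum p K a b (f i) (φ₃.toFun k) - Asum p K a b (f j) (φ₃.toFun k)‖
              + ‖Asum p K a b (f j) (φ₃.toFun k) - I j‖) := by
            apply (norm_add_le _ _).trans
            gcongr
            exact norm_add_le _ _
        _ ≤ R * ε' + η := by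
            rw [norm_sub_rev] at e₁
            linarith
    have hle : ‖I i - I j‖ ≤ R * ε' := le_of_forall_pos_le_add hstep
    have hRnn : (0:ℝ) ≤ R := norm_nonneg _
    have h1 : R / (2 * (R + 1)) < 1 := by
      rw [div_lt_one (by positivity)]
      linarith
    have hlt : R * ε' < ε := by
      calc R * ε' = ε * (R / (2 * (R + 1))) := by rw [hε'def]; ring
        _ < ε * 1 := by exact mul_lt_mul_of_pos_left h1 hε
        _ = ε := mul_one ε
    linarith
  obtain ⟨L, hL⟩ := cauchySeq_tendsto_of_complete hIcauchy
  refine ⟨⟨c', hgHol⟩, L, hL, ?_⟩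
  -- the integral of g
  intro ε hε
  set ε' : ℝ := ε / (3 * (R + 1)) with hε'def
  have hε'pos : 0 < ε' := by positivity
  obtain ⟨M₁, hM₁⟩ := hc'bnd ε' hε'pos
  obtain ⟨M₂, hM₂⟩ := Metric.tendsto_atTop.mp hL (ε / 3) (by positivity)
  set i : ℕ := max M₁ M₂ with hidef
  obtain ⟨φ, hφΦ, M, hMk, hM⟩ := hI i (ε / 3) (by positivity)
  refine ⟨φ, hφΦ, M, hMk, fun k hk => ?_⟩
  have e1 : ‖Asum p K a b g (φ.toFun k) - Asum p K a b (f i) (φ.toFun k)‖ ≤ R * ε' :=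
    hkey g (f i) c' (c i) hgHol (hf i) hε'pos.le (fun n => hM₁ i (le_max_left _ _) n) _
  have e2 : ‖Asum p K a b (f i) (φ.toFun k) - I i‖ < ε / 3 := hM k hk
  have e3 : ‖I i - L‖ < ε / 3 := by
    have := hM₂ i (le_max_right _ _)
    rwa [dist_eq_norm] at this
  have hRnn : (0:ℝ) ≤ R := norm_nonneg _
  have h1 : R / (3 * (R + 1)) < 1 / 3 := by
    rw [div_lt_div_iff₀ (by positivity) (by norm_num : (0:ℝ) < 3)]
    linarith
  have hlt : R * ε' < ε / 3 := by
    calc R * ε' = ε * (R / (3 * (R + 1))) := by rw [hε'def]; ring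
      _ < ε * (1 / 3) := by
          apply mul_lt_mul_of_pos_left h1 hε
      _ = ε / 3 := by ring
  calc ‖Asum p K a b g (φ.toFun k) - L‖
      = ‖(Asum p K a b g (φ.toFun k) - Asum p K a b (f i) (φ.toFun k))
          + ((Asum p K a b (f i) (φ.toFun k) - I i) + (I i - L))‖ := by
        congr 1; ring
    _ ≤ ‖Asum p K a b g (φ.toFun k) - Asum p K a b (f i) (φ.toFun k)‖
          + (‖Asum p K a b (f i) (φ.toFun k) - I i‖ + ‖I i - L‖) := by
        apply (norm_add_le _ _).trans
        gcongr
        exact norm_add_le _ _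
    _ < ε := by linarith
end

section
/- Let p be an odd prime, let a, b ∈ ℂ_p with R = |a − b|_p > 0, and let f : 𝒜(a,b) → ℂ_p. Let φ₀ be the path sequence φ₀(k) = k. If ∫_{𝒜(a,b),φ₀} f(x) dx exists, then for every path sequence φ the integral ∫_{𝒜(a,b),φ} f(x) dx exists and equals ∫_{𝒜(a,b),φ₀} f(x) dx. -/
/-!
Throughout, `K` plays the role of `ℂ_p`, the completion of an algebraic closure of `ℚ_p`:
it is a complete, algebraically closed, nonarchimedean (ultrametric) normed field equipped
with an isometric `ℚ_[p]`-algebra structure (hypothesis `hKext`).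
-/

open scoped BigOperators

/-- If the line integral of `f` on `𝒜(a,b)` exists with respect to the
path sequence `φ₀(k) = k`, then for every path sequence `φ` the integral exists and has
the same value. -/
theorem stmt_4 (p : ℕ) [Fact (Nat.Prime p)] (hp2 : p ≠ 2)
    (K : Type*) [NormedField K] [CompleteSpace K] [IsAlgClosed K] [IsUltrametricDist K]
    [Algebra ℚ_[p] K] (hKext : ∀ q : ℚ_[p], ‖algebraMap ℚ_[p] K q‖ = ‖q‖)
    (a b : K) (hR : 0 < ‖a - b‖) (f : K → K) (L : K)
    (h : Filter.Tendsto (fun k : ℕ => Asum p K a b f k) Filter.atTop (nhds L))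
    (φ : PathSeq) :
    Filter.Tendsto (fun k : ℕ => Asum p K a b f (φ.toFun k)) Filter.atTop (nhds L) := by
  have aux : ∀ n : ℕ, n ≤ φ.toFun (φ.k₀ + n) := by
    intro n
    induction n with
    | zero => exact Nat.zero_le _
    | succ m ih =>
      have := φ.mono (φ.k₀ + m) (φ.k₀ + (m + 1)) (Nat.le_add_right _ _)
        (by omega)
      omega
  have key : Filter.Tendsto φ.toFun Filter.atTop Filter.atTop := by
    refine Filter.tendsto_atTop_atTop.mpr fun N => ⟨φ.k₀ + N, fun k hk => ?_⟩
    have h1 := aux N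
    rcases eq_or_lt_of_le hk with h2 | h2
    · rw [← h2]; exact h1
    · have := φ.mono (φ.k₀ + N) k (Nat.le_add_right _ _) h2
      omega
  exact h.comp key
end

section
/- Let p be an odd prime, let a, b ∈ ℂ_p with R = |a − b|_p > 0, and suppose f is holomorphic on the closed disc D⁺(a,R) = {x ∈ ℂ_p : |x − a|_p ≤ R}, i.e. f is given by a single power series converging on all of D⁺(a,R). Then for every interlocked family Φ of path sequences, ∫_{𝒜(a,b),Φ} f(x) dx = 0. -/
/-!
Throughout, `K` plays the role of `ℂ_p`, the completion of an algebraic closure of `ℚ_p`: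
it is a complete, algebraically closed, nonarchimedean (ultrametric) normed field equipped
with an isometric `ℚ_[p]`-algebra structure (hypothesis `hKext`).
-/

open scoped BigOperators

open Filter in
/-- Sum of `ζ ^ m` over all `n`-th roots of unity. -/
lemma sum_rootsOfUnity_pow {K : Type*} [Field K] {n : ℕ} {ζ₀ : K}
    (hζ : IsPrimitiveRoot ζ₀ n) (hn : 0 < n) (m : ℕ) :
    ∑ ζ ∈ Polynomial.nthRootsFinset n (1 : K), ζ ^ m = if n ∣ m then (n : K) else 0 := by
  by_cases hd : n ∣ m
  · rw [if_pos hd]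
    obtain ⟨q, rfl⟩ := hd
    have h1 : ∀ ζ ∈ Polynomial.nthRootsFinset n (1 : K), ζ ^ (n * q) = 1 := by
      intro ζ hz
      rw [pow_mul, (Polynomial.mem_nthRootsFinset hn _).mp hz, one_pow]
    rw [Finset.sum_congr rfl h1, Finset.sum_const, hζ.card_nthRootsFinset, nsmul_eq_mul, mul_one]
  · rw [if_neg hd]
    have hz1 : ζ₀ ^ m ≠ 1 := fun h => hd ((hζ.pow_eq_one_iff_dvd m).mp h)
    have hζ0 : ζ₀ ≠ 0 := hζ.ne_zero hn.ne'
    have key : ζ₀ ^ m * ∑ ζ ∈ Polynomial.nthRootsFinset n (1 : K), ζ ^ m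
        = ∑ ζ ∈ Polynomial.nthRootsFinset n (1 : K), ζ ^ m := by
      rw [Finset.mul_sum]
      refine Finset.sum_nbij' (fun ζ => ζ₀ * ζ) (fun ζ => ζ₀⁻¹ * ζ) ?_ ?_ ?_ ?_ ?_
      · intro ζ hz
        rw [show (1:K) = 1 * 1 from (mul_one 1).symm]
        exact Polynomial.mul_mem_nthRootsFinset (hζ.mem_nthRootsFinset hn) hz
      · intro ζ hz
        rw [show (1:K) = 1 * 1 from (mul_one 1).symm]
        refine Polynomial.mul_mem_nthRootsFinset ?_ hz
        rw [Polynomial.mem_nthRootsFinset hn, inv_pow, hζ.pow_eq_one, inv_one]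
      · intro ζ hz
        field_simp
      · intro ζ hz
        field_simp
      · intro ζ hz
        rw [mul_pow]
    have := mul_eq_zero.mp (by linear_combination key : (ζ₀ ^ m - 1) *
      (∑ ζ ∈ Polynomial.nthRootsFinset n (1 : K), ζ ^ m) = 0)
    rcases this with h | h
    · exact absurd (by linear_combination h) hz1
    · exact h

open Filter in
lemma asum_eq_indicator (p : ℕ) [Fact (Nat.Prime p)]
    (K : Type*) [NormedField K] [IsAlgClosed K] [CharZero K]
    (a b : K) (c : ℕ → K) (f : K → K)
    (hf : HolomorphicOn' K c a f {x : K | ‖x - a‖ ≤ ‖a - b‖}) (N : ℕ) :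
    Asum p K a b f (N) = ∑' n : ℕ,
      Set.indicator {n : ℕ | p ^ N ∣ n + 1} (fun n => c n * (b - a) ^ (n + 1)) n := by
  classical
  have hp : 0 < p := (Fact.out : p.Prime).pos
  have hN' : 0 < p ^ N := pow_pos hp N
  haveI : NeZero ((p ^ N : ℕ) : K) := ⟨Nat.cast_ne_zero.mpr hN'.ne'⟩
  obtain ⟨ζ₀, hζ₀⟩ := HasEnoughRootsOfUnity.exists_primitiveRoot K (p ^ N)
  have hmem : ∀ ζ ∈ Polynomial.nthRootsFinset (p ^ N) (1 : K), ‖(b - a) * ζ‖ ≤ ‖a - b‖ := by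
    intro ζ hz
    have h1 : ζ ^ (p ^ N) = 1 := (Polynomial.mem_nthRootsFinset hN' _).mp hz
    have hnz : ‖ζ‖ = 1 := by
      have h2 : ‖ζ‖ ^ (p ^ N) = 1 := by
        rw [← norm_pow, h1, norm_one]
      rcases lt_trichotomy ‖ζ‖ 1 with h | h | h
      · exact absurd h2 (pow_lt_one₀ (norm_nonneg ζ) h hN'.ne').ne
      · exact h
      · exact absurd h2 (one_lt_pow₀ h hN'.ne').ne'
    rw [norm_mul, hnz, mul_one, norm_sub_rev]
  have hsummand : ∀ ζ ∈ Polynomial.nthRootsFinset (p ^ N) (1 : K),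
      Summable (fun n : ℕ => (b - a) * ζ * (c n * ((b - a) * ζ) ^ n)) := by
    intro ζ hz
    have hx := (hf (a + (b - a) * ζ) (by simpa using hmem ζ hz)).1
    simp only [add_sub_cancel_left] at hx
    exact hx.mul_left _
  have step1 : ∀ ζ ∈ Polynomial.nthRootsFinset (p ^ N) (1 : K),
      (b - a) * ζ * f (a + (b - a) * ζ)
        = ∑' n : ℕ, (b - a) * ζ * (c n * ((b - a) * ζ) ^ n) := by
    intro ζ hz
    have hx := (hf (a + (b - a) * ζ) (by simpa using hmem ζ hz)).2
    simp only [add_sub_cancel_left] at hx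
    rw [hx, tsum_mul_left]
  have inner : ∀ n : ℕ,
      ∑ ζ ∈ Polynomial.nthRootsFinset (p ^ N) (1 : K), (b - a) * ζ * (c n * ((b - a) * ζ) ^ n)
        = ((p ^ N : ℕ) : K) *
          Set.indicator {n : ℕ | p ^ N ∣ n + 1} (fun n => c n * (b - a) ^ (n + 1)) n := by
    intro n
    have h3 : ∀ ζ : K, (b - a) * ζ * (c n * ((b - a) * ζ) ^ n)
        = c n * (b - a) ^ (n + 1) * ζ ^ (n + 1) := by
      intro ζ; rw [mul_pow]; ring
    simp only [h3]
    rw [← Finset.mul_sum, sum_rootsOfUnity_pow hζ₀ hN']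
    by_cases hd : p ^ N ∣ n + 1
    · rw [if_pos hd, Set.indicator_of_mem (by exact hd : n ∈ {n : ℕ | p ^ N ∣ n + 1})]
      ring
    · rw [if_neg hd, Set.indicator_of_notMem (by exact hd : n ∉ {n : ℕ | p ^ N ∣ n + 1}),
        mul_zero, mul_zero]
  unfold Asum
  rw [Finset.sum_congr rfl step1, ← Summable.tsum_finsetSum hsummand]
  have h4 : (fun n : ℕ => ∑ ζ ∈ Polynomial.nthRootsFinset (p ^ N) (1 : K),
      (b - a) * ζ * (c n * ((b - a) * ζ) ^ n))
      = fun n : ℕ => ((p ^ N : ℕ) : K) *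
        Set.indicator {n : ℕ | p ^ N ∣ n + 1} (fun n => c n * (b - a) ^ (n + 1)) n :=
    funext inner
  rw [h4, tsum_mul_left, ← mul_assoc]
  have h5 : ((p : K) ^ N)⁻¹ * ((p ^ N : ℕ) : K) = 1 := by
    rw [Nat.cast_pow]
    exact inv_mul_cancel₀ (pow_ne_zero N (Nat.cast_ne_zero.mpr hp.ne'))
  rw [h5, one_mul]

/-- If `f` is holomorphic on the closed disc `D⁺(a,R)` with `R = |a-b| > 0`,
then for every interlocked family `Φ`, `∫_{𝒜(a,b),Φ} f(x) dx = 0`. -/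
theorem stmt_5 (p : ℕ) [Fact (Nat.Prime p)] (hp2 : p ≠ 2)
    (K : Type*) [NormedField K] [CompleteSpace K] [IsAlgClosed K] [IsUltrametricDist K]
    [Algebra ℚ_[p] K] (hKext : ∀ q : ℚ_[p], ‖algebraMap ℚ_[p] K q‖ = ‖q‖)
    (a b : K) (hR : 0 < ‖a - b‖) (c : ℕ → K) (f : K → K)
    (hf : HolomorphicOn' K c a f {x : K | ‖x - a‖ ≤ ‖a - b‖})
    (Φ : Set PathSeq) (hΦ : Interlocked Φ) :
    HasIntegral p K a b f Φ 0 := by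
  classical
  haveI : CharZero K := charZero_of_injective_algebraMap (algebraMap ℚ_[p] K).injective
  obtain ⟨⟨φ, hφΦ⟩, -⟩ := hΦ
  have hp : 1 < p := (Fact.out : p.Prime).one_lt
  -- the terms of the series tend to zero
  have hsumb : Summable (fun n : ℕ => c n * (b - a) ^ (n + 1)) := by
    have h0 : Summable (fun n : ℕ => c n * (b - a) ^ n) := by
      have := (hf b (by simp [norm_sub_rev])).1
      simpa using this
    have := h0.mul_right (b - a)
    refine this.congr fun n => ?_
    rw [pow_succ]; ring
  intro ε hε
  have htend : Filter.Tendsto (fun n : ℕ => c n * (b - a) ^ (n + 1)) Filter.atTop (nhds 0) :=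
    hsumb.tendsto_atTop_zero
  obtain ⟨M₀, hM₀⟩ := Metric.tendsto_atTop.mp htend (ε / 2) (by linarith)
  refine ⟨φ, hφΦ, φ.k₀ + M₀, Nat.le_add_right _ _, fun k hk => ?_⟩
  -- `φ.toFun k` grows at least linearly
  have hgrow : ∀ k, φ.k₀ ≤ k → k - φ.k₀ ≤ φ.toFun k := by
    intro k hk
    induction k with
    | zero => simp
    | succ k ih =>
      rcases Nat.lt_or_ge k φ.k₀ with h | h
      · omega
      · have := φ.mono k (k + 1) h (Nat.lt_succ_self k)
        have := ih h
        omega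
  set N := φ.toFun k with hN
  have hkk : φ.k₀ ≤ k := le_trans (Nat.le_add_right _ _) hk.le
  have hNM : M₀ < N := by
    have h1 := hgrow k hkk
    omega
  have hNlt : N < p ^ N := Nat.lt_pow_self hp
  -- bound each indicator term by ε/2
  have hbound : ∀ n : ℕ,
      ‖Set.indicator {n : ℕ | p ^ N ∣ n + 1} (fun n => c n * (b - a) ^ (n + 1)) n‖ ≤ ε / 2 := by
    intro n
    by_cases hd : n ∈ {n : ℕ | p ^ N ∣ n + 1}
    · rw [Set.indicator_of_mem hd]
      have h1 : p ^ N ≤ n + 1 := Nat.le_of_dvd (Nat.succ_pos n) hd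
      have h2 : M₀ ≤ n := by omega
      have := hM₀ n h2
      rw [dist_zero_right] at this
      exact this.le
    · rw [Set.indicator_of_notMem hd, norm_zero]; linarith
  rw [sub_zero, asum_eq_indicator p K a b c f hf N]
  calc ‖∑' n : ℕ, Set.indicator {n : ℕ | p ^ N ∣ n + 1}
        (fun n => c n * (b - a) ^ (n + 1)) n‖
      ≤ ε / 2 := IsUltrametricDist.norm_tsum_le_of_forall_le_of_nonneg (by linarith) hbound
    _ < ε := by linarith
end

section
/- Let p be an odd prime, let a, b ∈ ℂ_p with R = |a − b|_p > 0, and let f(x) = Σ_{n≥0} c_n (x − b)^n be holomorphic on 𝒜(a,b) with controlled coefficients of order β < 1/2. Let f′ denote the termwise derivative f′(x) = Σ_{n≥0} (n+1) c_{n+1} (x − b)^n. Then for every interlocked family Φ of path sequences, ∫_{𝒜(a,b),Φ} f′(x) dx = 0. -/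
/-!
Throughout, `K` plays the role of `ℂ_p`, the completion of an algebraic closure of `ℚ_p`:
it is a complete, algebraically closed, nonarchimedean (ultrametric) normed field equipped
with an isometric `ℚ_[p]`-algebra structure (hypothesis `hKext`).
-/

open scoped BigOperators

open Polynomial Filter Topology IsUltrametricDist

section AuxLemmas

lemma aux_norm_root_eq_one {K : Type*} [NormedField K] {ζ : K} {m : ℕ} (hm : 0 < m)
    (h : ζ ^ m = 1) : ‖ζ‖ = 1 := by
  have h1 : ‖ζ‖ ^ m = 1 := by rw [← norm_pow, h, norm_one]
  rcases lt_trichotomy ‖ζ‖ 1 with hlt | heq | hgt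
  · have := pow_lt_one₀ (norm_nonneg ζ) hlt hm.ne'
    rw [h1] at this; exact absurd this (lt_irrefl _)
  · exact heq
  · have := one_lt_pow₀ hgt hm.ne'
    rw [h1] at this; exact absurd this (lt_irrefl _)

lemma aux_norm_one_sub_pow_le {K : Type*} [NormedField K] [IsUltrametricDist K] {ζ : K}
    (hζ : ‖ζ‖ ≤ 1) (a : ℕ) : ‖1 - ζ ^ a‖ ≤ ‖1 - ζ‖ := by
  have hid : 1 - ζ ^ a = (1 - ζ) * ∑ i ∈ Finset.range a, ζ ^ i := by
    have := geom_sum_mul ζ a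
    linear_combination this
  rw [hid, norm_mul]
  have : ‖∑ i ∈ Finset.range a, ζ ^ i‖ ≤ 1 := by
    refine norm_sum_le_of_forall_le_of_nonneg zero_le_one fun i _ => ?_
    rw [norm_pow]; exact pow_le_one₀ (norm_nonneg ζ) hζ
  calc ‖1 - ζ‖ * ‖∑ i ∈ Finset.range a, ζ ^ i‖ ≤ ‖1 - ζ‖ * 1 :=
        mul_le_mul_of_nonneg_left this (norm_nonneg _)
    _ = ‖1 - ζ‖ := mul_one _

lemma aux_nthRootsFinset_eq_image {K : Type*} [Field K] [DecidableEq K] {m : ℕ} (hm : 0 < m)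
    {ζ₀ : K} (h : IsPrimitiveRoot ζ₀ m) :
    nthRootsFinset m (1 : K) = (Finset.range m).image (ζ₀ ^ ·) := by
  symm
  apply Finset.eq_of_subset_of_card_le
  · intro x hx
    simp only [Finset.mem_image, Finset.mem_range] at hx
    obtain ⟨a, _, rfl⟩ := hx
    rw [Polynomial.mem_nthRootsFinset hm, ← pow_mul, mul_comm, pow_mul, h.pow_eq_one, one_pow]
  · rw [h.card_nthRootsFinset, Finset.card_image_of_injOn, Finset.card_range]
    intro i hi j hj hij
    exact h.pow_inj (Finset.mem_range.mp hi) (Finset.mem_range.mp hj) hij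

lemma aux_sum_pow_roots {K : Type*} [Field K] [DecidableEq K] {m : ℕ} (hm : 0 < m) {ζ₀ : K}
    (h : IsPrimitiveRoot ζ₀ m) (i : ℕ) :
    ∑ ζ ∈ nthRootsFinset m (1 : K), ζ ^ i = if m ∣ i then (m : K) else 0 := by
  rw [aux_nthRootsFinset_eq_image hm h, Finset.sum_image
    (fun a ha b hb hab => h.pow_inj (Finset.mem_range.mp ha) (Finset.mem_range.mp hb) hab)]
  have : ∀ a, (ζ₀ ^ a) ^ i = (ζ₀ ^ i) ^ a := fun a => by
    rw [← pow_mul, ← pow_mul, mul_comm]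
  simp_rw [this]
  by_cases hdvd : m ∣ i
  · rw [if_pos hdvd]
    obtain ⟨q, rfl⟩ := hdvd
    simp [pow_mul, h.pow_eq_one]
  · rw [if_neg hdvd]
    have hne : ζ₀ ^ i ≠ 1 := fun hcon => hdvd (h.dvd_of_pow_eq_one i hcon)
    have hpow : (ζ₀ ^ i) ^ m = 1 := by
      rw [← pow_mul, mul_comm, pow_mul, h.pow_eq_one, one_pow]
    have := geom_sum_mul (ζ₀ ^ i) m
    rw [hpow, sub_self] at this
    rcases mul_eq_zero.mp this with h0 | h0
    · exact h0
    · exact absurd (sub_eq_zero.mp h0) hne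

lemma aux_prim_norm_eq {K : Type*} [NormedField K] [IsUltrametricDist K] {m : ℕ} [NeZero m]
    {ζ₀ μ : K} (h : IsPrimitiveRoot ζ₀ m) (hμ : IsPrimitiveRoot μ m) :
    ‖1 - μ‖ = ‖1 - ζ₀‖ := by
  have hm : 0 < m := NeZero.pos m
  apply le_antisymm
  · obtain ⟨a, _, rfl⟩ := h.eq_pow_of_pow_eq_one hμ.pow_eq_one
    exact aux_norm_one_sub_pow_le (le_of_eq (aux_norm_root_eq_one hm h.pow_eq_one)) a
  · obtain ⟨b, _, rfl⟩ := hμ.eq_pow_of_pow_eq_one h.pow_eq_one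
    exact aux_norm_one_sub_pow_le (le_of_eq (aux_norm_root_eq_one hm hμ.pow_eq_one)) b

lemma aux_cyclotomic_norm {K : Type*} [NormedField K] [IsUltrametricDist K] {p N : ℕ}
    [Fact p.Prime] (hN : 0 < N) {ζ₀ : K} (h : IsPrimitiveRoot ζ₀ (p ^ N)) :
    ‖1 - ζ₀‖ ^ (Nat.totient (p ^ N)) = ‖(p : K)‖ := by
  classical
  haveI : NeZero (p ^ N) := ⟨pow_ne_zero _ (Fact.out (p := p.Prime)).pos.ne'⟩
  have hc := Polynomial.cyclotomic_eq_prod_X_sub_primitiveRoots h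
  have hev : (p : K) = ∏ μ ∈ primitiveRoots (p ^ N) K, (1 - μ) := by
    have h1 : Polynomial.eval 1 (Polynomial.cyclotomic (p ^ N) K) = (p : K) := by
      obtain ⟨N', rfl⟩ : ∃ N', N = N' + 1 := ⟨N - 1, (Nat.succ_pred_eq_of_pos hN).symm⟩
      exact_mod_cast Polynomial.eval_one_cyclotomic_prime_pow N'
    rw [hc] at h1
    rw [← h1, Polynomial.eval_prod]
    simp
  have hnorm : ‖(p : K)‖ = ∏ μ ∈ primitiveRoots (p ^ N) K, ‖1 - μ‖ := by
    rw [hev, norm_prod]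
  rw [hnorm, ← h.card_primitiveRoots, ← Finset.prod_const,
    Finset.prod_congr rfl fun μ hμ =>
      aux_prim_norm_eq ((mem_primitiveRoots (NeZero.pos (p ^ N))).mp hμ) h]

lemma aux_S_eq {K : Type*} [Field K] [DecidableEq K] {m : ℕ} (hm : 0 < m) {ζ₀ : K}
    (h : IsPrimitiveRoot ζ₀ m) (n : ℕ) :
    ∑ ζ ∈ nthRootsFinset m (1 : K), ζ * (1 - ζ) ^ n
      = (m : K) * ∑ j ∈ (Finset.range (n+1)).filter (fun j => m ∣ (j+1)),
          (-1) ^ j * (n.choose j : K) := by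
  have hexp : ∀ ζ : K, ζ * (1 - ζ) ^ n
      = ∑ j ∈ Finset.range (n+1), (-1) ^ j * (n.choose j : K) * ζ ^ (j+1) := by
    intro ζ
    have : (1 - ζ) ^ n = ((-ζ) + 1) ^ n := by ring_nf
    rw [this, add_pow, Finset.mul_sum]
    refine Finset.sum_congr rfl fun j _ => ?_
    rw [neg_pow]
    ring
  simp_rw [hexp]
  rw [Finset.sum_comm]
  have : ∀ j ∈ Finset.range (n+1),
      ∑ ζ ∈ nthRootsFinset m (1 : K), (-1) ^ j * (n.choose j : K) * ζ ^ (j+1)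
        = (-1) ^ j * (n.choose j : K) * (if m ∣ (j+1) then (m : K) else 0) := by
    intro j _
    rw [← Finset.mul_sum, aux_sum_pow_roots hm h]
  rw [Finset.sum_congr rfl this]
  simp_rw [mul_ite, mul_zero]
  rw [← Finset.sum_filter, Finset.mul_sum]
  exact Finset.sum_congr rfl fun j _ => mul_comm _ _

lemma aux_S_zero {K : Type*} [Field K] [DecidableEq K] {m : ℕ} (hm : 0 < m) {ζ₀ : K}
    (h : IsPrimitiveRoot ζ₀ m) {n : ℕ} (hn : n + 1 < m) :
    ∑ ζ ∈ nthRootsFinset m (1 : K), ζ * (1 - ζ) ^ n = 0 := by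
  rw [aux_S_eq hm h]
  have : (Finset.range (n+1)).filter (fun j => m ∣ (j+1)) = ∅ := by
    rw [Finset.filter_eq_empty_iff]
    intro j hj hdvd
    have h1 : j + 1 ≤ n + 1 := Finset.mem_range.mp hj
    have h2 : m ≤ j + 1 := Nat.le_of_dvd (Nat.succ_pos j) hdvd
    omega
  rw [this, Finset.sum_empty, mul_zero]

lemma aux_nat_id {m n j : ℕ} (hdvd : m ∣ (j+1)) :
    (n+1) * n.choose j * m = m^2 * ((j+1)/m) * (n+1).choose (j+1) := by
  have h1 : (n+1) * n.choose j = (n+1).choose (j+1) * (j+1) := Nat.add_one_mul_choose_eq n j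
  have h2 : m * ((j+1)/m) = j + 1 := Nat.mul_div_cancel' hdvd
  calc (n+1) * n.choose j * m = (n+1).choose (j+1) * (j+1) * m := by rw [h1]
    _ = (n+1).choose (j+1) * (m * ((j+1)/m)) * m := by rw [h2]
    _ = m^2 * ((j+1)/m) * (n+1).choose (j+1) := by ring

lemma aux_norm_nS {K : Type*} [NormedField K] [IsUltrametricDist K] [DecidableEq K] {m : ℕ}
    (hm : 0 < m) {ζ₀ : K} (h : IsPrimitiveRoot ζ₀ m) (n : ℕ) :
    ‖((n : K) + 1) * ∑ ζ ∈ nthRootsFinset m (1 : K), ζ * (1 - ζ) ^ n‖ ≤ ‖(m : K)‖^2 := by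
  rw [aux_S_eq hm h]
  set F := (Finset.range (n+1)).filter (fun j => m ∣ (j+1)) with hF
  have key : ((n : K) + 1) * ((m : K) * ∑ j ∈ F, (-1) ^ j * (n.choose j : K))
      = (m : K)^2 * ∑ j ∈ F, (-1) ^ j * (((j+1)/m : ℕ) : K) * (((n+1).choose (j+1) : ℕ) : K) := by
    rw [Finset.mul_sum, Finset.mul_sum, Finset.mul_sum]
    refine Finset.sum_congr rfl fun j hj => ?_
    have hdvd : m ∣ (j+1) := (Finset.mem_filter.mp hj).2
    have := aux_nat_id (n := n) hdvd
    have hcast : ((n : K)+1) * (n.choose j : K) * (m : K)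
        = (m : K)^2 * (((j+1)/m : ℕ) : K) * (((n+1).choose (j+1) : ℕ) : K) := by
      have := congrArg (fun t : ℕ => (t : K)) this
      push_cast at this ⊢
      linear_combination this
    linear_combination ((-1 : K)^j) * hcast
  rw [key, norm_mul, norm_pow]
  have hz : ‖∑ j ∈ F, (-1 : K) ^ j * (((j+1)/m : ℕ) : K) * (((n+1).choose (j+1) : ℕ) : K)‖ ≤ 1 := by
    refine norm_sum_le_of_forall_le_of_nonneg zero_le_one fun j _ => ?_
    rw [norm_mul, norm_mul, norm_pow, norm_neg, norm_one, one_pow, one_mul]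
    exact mul_le_one₀ (norm_natCast_le_one K _) (norm_nonneg _) (norm_natCast_le_one K _)
  calc ‖(m : K)‖ ^ 2 * ‖∑ j ∈ F, (-1 : K) ^ j * (((j+1)/m : ℕ) : K) * (((n+1).choose (j+1) : ℕ) : K)‖
      ≤ ‖(m : K)‖ ^ 2 * 1 := mul_le_mul_of_nonneg_left hz (by positivity)
    _ = ‖(m : K)‖ ^ 2 := mul_one _

lemma aux_summable {K : Type*} [NormedField K] [IsUltrametricDist K] [CompleteSpace K]
    (c : ℕ → K) {R M0 n₀ : ℝ} (hR : 0 < R)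
    (hb : ∀ n : ℕ, n₀ < (n : ℝ) → ‖c n‖ * R ^ n ≤ M0 * (n : ℝ)) {x : K} (hx : ‖x‖ < R) :
    Summable (fun n : ℕ => ((n : K) + 1) * c (n + 1) * x ^ n) := by
  apply NonarchimedeanAddGroup.summable_of_tendsto_cofinite_zero
  rw [Nat.cofinite_eq_atTop]
  set u : ℝ := ‖x‖ / R with hu
  have hu0 : 0 ≤ u := div_nonneg (norm_nonneg x) hR.le
  have hu1 : u < 1 := (div_lt_one hR).mpr hx
  apply squeeze_zero_norm' (a := fun n : ℕ => (M0 / R) * (((n : ℝ) + 1) * u ^ n))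
  · have hev : ∀ᶠ n : ℕ in atTop, n₀ < ((n + 1 : ℕ) : ℝ) := by
      filter_upwards [eventually_ge_atTop ⌈n₀⌉₊] with n hn
      have : n₀ ≤ (n : ℝ) := le_trans (Nat.le_ceil n₀) (by exact_mod_cast hn)
      push_cast
      linarith
    filter_upwards [hev] with n hn
    have hb' := hb (n + 1) hn
    have hnormle : ‖((n : K) + 1) * c (n + 1) * x ^ n‖ ≤ ‖c (n + 1)‖ * ‖x‖ ^ n := by
      rw [norm_mul, norm_mul, norm_pow]
      have h1 : ‖(n : K) + 1‖ ≤ 1 := by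
        have : ((n : K) + 1) = ((n + 1 : ℕ) : K) := by push_cast; ring
        rw [this]; exact norm_natCast_le_one K _
      rw [mul_assoc]
      exact mul_le_of_le_one_left (mul_nonneg (norm_nonneg _) (pow_nonneg (norm_nonneg x) n)) h1
    refine hnormle.trans ?_
    have hkey : ‖c (n + 1)‖ * ‖x‖ ^ n
        = (‖c (n + 1)‖ * R ^ (n + 1)) * (u ^ n / R) := by
      rw [hu, div_pow]
      field_simp
      ring
    rw [hkey]
    have hR1 : 0 ≤ u ^ n / R := div_nonneg (pow_nonneg hu0 n) hR.le
    calc (‖c (n + 1)‖ * R ^ (n + 1)) * (u ^ n / R)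
        ≤ (M0 * ((n + 1 : ℕ) : ℝ)) * (u ^ n / R) := mul_le_mul_of_nonneg_right hb' hR1
      _ = (M0 / R) * (((n : ℝ) + 1) * u ^ n) := by push_cast; ring
  · have h1 : Tendsto (fun n : ℕ => ((n : ℝ) + 1) * u ^ n) atTop (𝓝 0) := by
      have hs : Summable (fun n : ℕ => ((n : ℝ) + 1) * u ^ n) := by
        have hs1 : Summable (fun n : ℕ => (n : ℝ) ^ 1 * u ^ n) :=
          summable_pow_mul_geometric_of_norm_lt_one 1 (by rwa [Real.norm_of_nonneg hu0])
        have hs2 : Summable (fun n : ℕ => u ^ n) := summable_geometric_of_lt_one hu0 hu1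
        have := hs1.add hs2
        refine this.congr fun n => ?_
        ring
      exact hs.tendsto_atTop_zero
    have := h1.const_mul (M0 / R)
    simpa using this

lemma aux_decr {P : ℝ} (hP : 2 ≤ P) {k₀ : ℕ} : ∀ k : ℕ, k₀ ≤ k →
    ((k : ℝ) + 1) * (P ^ k)⁻¹ ≤ ((k₀ : ℝ) + 1) * (P ^ k₀)⁻¹ := by
  intro k hk
  induction k, hk using Nat.le_induction with
  | base => exact le_refl _
  | succ k hk ih =>
    refine le_trans ?_ ih
    have hPpos : (0:ℝ) < P := lt_of_lt_of_le two_pos hP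
    have h1 : (((k+1:ℕ):ℝ) + 1) * P⁻¹ ≤ (k:ℝ) + 1 := by
      rw [mul_inv_le_iff₀ hPpos]
      push_cast
      nlinarith [Nat.cast_nonneg (α := ℝ) k]
    calc (((k+1:ℕ):ℝ)+1) * (P^(k+1))⁻¹ = ((((k+1:ℕ):ℝ)+1) * P⁻¹) * (P^k)⁻¹ := by
          rw [pow_succ, mul_inv]; ring
      _ ≤ ((k:ℝ)+1) * (P^k)⁻¹ := mul_le_mul_of_nonneg_right h1 (by positivity)

lemma aux_4N : ∀ N : ℕ, 5 ≤ N → 4 * N + 1 ≤ 2 ^ N := by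
  intro N hN
  induction N with
  | zero => omega
  | succ N ih =>
    rcases Nat.lt_or_ge N 5 with h | h
    · interval_cases N <;> simp_all
    · have := ih (by omega)
      have h2 : 2 ^ N ≥ 32 := by calc 2^N ≥ 2^5 := Nat.pow_le_pow_right (by norm_num) h
                                      _ = 32 := by norm_num
      rw [pow_succ]
      omega

end AuxLemmas


/-- If `f(x) = ∑ c_n (x-b)^n` is holomorphic on `𝒜(a,b)` with controlled
coefficients of order `β < 1/2`, then the termwise derivative
`f'(x) = ∑ (n+1) c_{n+1} (x-b)^n` has `∫_{𝒜(a,b),Φ} f'(x) dx = 0` for every interlocked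
family `Φ`. -/
theorem stmt_6 (p : ℕ) [Fact (Nat.Prime p)] (hp2 : p ≠ 2)
    (K : Type*) [NormedField K] [CompleteSpace K] [IsAlgClosed K] [IsUltrametricDist K]
    [Algebra ℚ_[p] K] (hKext : ∀ q : ℚ_[p], ‖algebraMap ℚ_[p] K q‖ = ‖q‖)
    (a b : K) (hR : 0 < ‖a - b‖) (c : ℕ → K) (f : K → K)
    (hf : HolomorphicOn' K c b f (arc K a b))
    (β : ℝ) (hβ0 : 0 ≤ β) (hβ : β < 1 / 2) (hc : Controlled K c ‖a - b‖ β)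
    (Φ : Set PathSeq) (hΦ : Interlocked Φ) :
    HasIntegral p K a b
      (fun x => ∑' n : ℕ, ((n : K) + 1) * c (n + 1) * (x - b) ^ n) Φ 0 := by
  classical
  have hp : p.Prime := Fact.out
  have hp1 : (1:ℝ) < (p:ℝ) := by exact_mod_cast hp.one_lt
  have hp0 : (0:ℝ) < (p:ℝ) := lt_trans one_pos hp1
  have hp2' : (2:ℝ) ≤ (p:ℝ) := by exact_mod_cast hp.two_le
  haveI : CharZero K := charZero_of_injective_algebraMap (algebraMap ℚ_[p] K).injective
  have hnormp : ‖(p : K)‖ = (p:ℝ)⁻¹ := by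
    rw [← map_natCast (algebraMap ℚ_[p] K) p, hKext, Padic.norm_p]
  set R := ‖a - b‖ with hRdef
  obtain ⟨M0, n₀, hn₀pos, hcM⟩ := hc
  have hM0 : 0 < M0 := by
    set n₂ : ℕ := ⌈n₀⌉₊ + 1 with hn₂def
    have hn₂ : n₀ < (n₂:ℝ) := by
      refine lt_of_le_of_lt (Nat.le_ceil n₀) ?_
      exact_mod_cast Nat.lt_succ_self _
    have h1 := hcM n₂ hn₂
    have h2 : (0:ℝ) ≤ ‖c n₂‖ * R ^ n₂ :=
      mul_nonneg (norm_nonneg _) (pow_nonneg (norm_nonneg _) _)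
    have h3 : (0:ℝ) < (n₂:ℝ) ^ β := Real.rpow_pos_of_pos (by positivity) β
    nlinarith
  have hcM1 : ∀ n : ℕ, n₀ < (n:ℝ) → ‖c n‖ * R ^ n ≤ M0 * (n:ℝ) := by
    intro n hn
    have h1 := hcM n hn
    have hn1 : (1:ℝ) ≤ (n:ℝ) := by
      have h2 : (0:ℝ) < (n:ℝ) := lt_trans hn₀pos hn
      have : 0 < n := by exact_mod_cast h2
      exact_mod_cast this
    have h2 : (n:ℝ)^β ≤ (n:ℝ) := by
      calc (n:ℝ)^β ≤ (n:ℝ)^(1:ℝ) :=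
            Real.rpow_le_rpow_of_exponent_le hn1 (by linarith)
        _ = (n:ℝ) := Real.rpow_one _
    have h3 : M0 * (n:ℝ)^β ≤ M0 * (n:ℝ) := mul_le_mul_of_nonneg_left h2 hM0.le
    linarith
  intro ε hε
  obtain ⟨φ, hφΦ⟩ := hΦ.1
  refine ⟨φ, hφΦ, ?_⟩
  set r : ℝ := (p:ℝ) ^ (2*β - 1) with hrdef
  have hr0 : 0 ≤ r := (Real.rpow_pos_of_pos hp0 _).le
  have hr1 : r < 1 := Real.rpow_lt_one_of_one_lt_of_neg hp1 (by linarith)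
  have hevent : ∀ᶠ N : ℕ in atTop,
      ((1 ≤ N ∧ n₀ < (p:ℝ)^N) ∧ (M0 * r ^ N < ε ∧ (4*N+1 ≤ p^N ∧ M0 * ((p:ℝ)^N)⁻¹ < ε))) := by
    have t1 : Tendsto (fun N : ℕ => (p:ℝ)^N) atTop atTop :=
      tendsto_pow_atTop_atTop_of_one_lt hp1
    have e1 : ∀ᶠ N : ℕ in atTop, n₀ < (p:ℝ)^N := t1.eventually_gt_atTop n₀
    have t2 : Tendsto (fun N : ℕ => M0 * r ^ N) atTop (𝓝 0) := by
      have := tendsto_pow_atTop_nhds_zero_of_lt_one hr0 hr1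
      simpa using this.const_mul M0
    have e2 : ∀ᶠ N : ℕ in atTop, M0 * r ^ N < ε :=
      t2.eventually_lt_const hε
    have e3 : ∀ᶠ N : ℕ in atTop, 4*N+1 ≤ p^N := by
      filter_upwards [eventually_ge_atTop 5] with N hN
      calc 4*N+1 ≤ 2^N := aux_4N N hN
        _ ≤ p^N := Nat.pow_le_pow_left hp.two_le N
    have t4 : Tendsto (fun N : ℕ => M0 * ((p:ℝ)^N)⁻¹) atTop (𝓝 0) := by
      have := t1.inv_tendsto_atTop
      simpa using this.const_mul M0
    have e4 : ∀ᶠ N : ℕ in atTop, M0 * ((p:ℝ)^N)⁻¹ < ε := t4.eventually_lt_const hε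
    have e0 : ∀ᶠ N : ℕ in atTop, 1 ≤ N := eventually_ge_atTop 1
    filter_upwards [e0, e1, e2, e3, e4] with N h0 h1 h2 h3 h4
    exact ⟨⟨h0, h1⟩, h2, h3, h4⟩
  obtain ⟨N₀, hN₀⟩ := eventually_atTop.mp hevent
  have key : ∀ N : ℕ, N₀ ≤ N →
      ‖Asum p K a b (fun x => ∑' n : ℕ, ((n : K) + 1) * c (n + 1) * (x - b) ^ n) N - 0‖ < ε := by
    intro N hN
    obtain ⟨⟨e0, e1⟩, e2, e3, e4⟩ := hN₀ N hN
    have hNpos : 0 < N := e0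
    have hmpos : 0 < p ^ N := pow_pos hp.pos N
    haveI : NeZero (p ^ N) := ⟨hmpos.ne'⟩
    haveI : NeZero ((p ^ N : ℕ) : K) := ⟨Nat.cast_ne_zero.mpr hmpos.ne'⟩
    obtain ⟨ζ₀, hζ₀⟩ := HasEnoughRootsOfUnity.exists_primitiveRoot K (p ^ N)
    set t : ℝ := ‖1 - ζ₀‖ with htdef
    have htpow : t ^ (p ^ N).totient = (p : ℝ)⁻¹ := (aux_cyclotomic_norm hNpos hζ₀).trans hnormp
    have ht0 : 0 ≤ t := norm_nonneg _
    have htotpos : 0 < (p ^ N).totient := Nat.totient_pos.mpr hmpos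
    have hpinv0 : (0:ℝ) ≤ (p:ℝ)⁻¹ := by positivity
    have hpinvlt1 : (p:ℝ)⁻¹ < 1 := by
      rw [inv_lt_one_iff₀]; right; exact hp1
    have ht1 : t < 1 := by
      by_contra hcon
      push_neg at hcon
      have h1 : (1:ℝ) ≤ t ^ (p ^ N).totient := one_le_pow₀ hcon
      rw [htpow] at h1
      linarith
    have hroot_norm : ∀ ζ ∈ nthRootsFinset (p ^ N) (1 : K), ‖ζ‖ = 1 := fun ζ hζ =>
      aux_norm_root_eq_one hmpos ((Polynomial.mem_nthRootsFinset hmpos (1 : K)).mp hζ)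
    have hroot_t : ∀ ζ ∈ nthRootsFinset (p ^ N) (1 : K), ‖1 - ζ‖ ≤ t := by
      intro ζ hζ
      obtain ⟨i, _, rfl⟩ := hζ₀.eq_pow_of_pow_eq_one ((Polynomial.mem_nthRootsFinset hmpos (1 : K)).mp hζ)
      exact aux_norm_one_sub_pow_le (le_of_eq (aux_norm_root_eq_one hmpos hζ₀.pow_eq_one)) i
    set S : ℕ → K := fun n => ∑ ζ ∈ nthRootsFinset (p ^ N) (1 : K), ζ * (1 - ζ) ^ n with hSdef
    have hSzero : ∀ n : ℕ, n + 1 < p ^ N → S n = 0 := fun n hn => aux_S_zero hmpos hζ₀ hn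
    have hnS : ∀ n : ℕ, ‖((n : K) + 1) * S n‖ ≤ ((p:ℝ)⁻¹) ^ (2 * N) := by
      intro n
      have h1 := aux_norm_nS hmpos hζ₀ n
      have h2 : ‖((p ^ N : ℕ) : K)‖ = ((p:ℝ)⁻¹) ^ N := by
        rw [Nat.cast_pow, norm_pow, hnormp]
      rw [h2] at h1
      calc ‖((n : K) + 1) * S n‖ ≤ (((p:ℝ)⁻¹) ^ N) ^ 2 := h1
        _ = ((p:ℝ)⁻¹) ^ (2 * N) := by rw [← pow_mul]; ring_nf
    have hSle : ∀ n : ℕ, ‖S n‖ ≤ ((p:ℝ)⁻¹) ^ (n / p ^ N) := by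
      intro n
      have h1 : ‖S n‖ ≤ t ^ n := by
        refine norm_sum_le_of_forall_le_of_nonneg (pow_nonneg ht0 n) fun ζ hζ => ?_
        rw [norm_mul, hroot_norm ζ hζ, one_mul, norm_pow]
        exact pow_le_pow_left₀ (norm_nonneg _) (hroot_t ζ hζ) n
      refine h1.trans ?_
      calc t ^ n ≤ t ^ ((p ^ N).totient * (n / (p ^ N).totient)) := by
            refine pow_le_pow_of_le_one ht0 ht1.le ?_
            calc (p ^ N).totient * (n / (p ^ N).totient)
                = (n / (p ^ N).totient) * (p ^ N).totient := Nat.mul_comm _ _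
              _ ≤ n := Nat.div_mul_le_self n _
        _ = (t ^ (p ^ N).totient) ^ (n / (p ^ N).totient) := by rw [pow_mul]
        _ = ((p:ℝ)⁻¹) ^ (n / (p ^ N).totient) := by rw [htpow]
        _ ≤ ((p:ℝ)⁻¹) ^ (n / p ^ N) :=
            pow_le_pow_of_le_one hpinv0 hpinvlt1.le
              (Nat.div_le_div_left (Nat.totient_le _) htotpos)
    have hsummand : ∀ ζ ∈ nthRootsFinset (p ^ N) (1 : K),
        Summable (fun n : ℕ => (b - a) * ζ * (((n : K) + 1) * c (n + 1) * ((a - b) * (1 - ζ)) ^ n)) := by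
      intro ζ hζ
      refine Summable.mul_left _ (aux_summable c hR hcM1 ?_)
      rw [norm_mul]
      calc ‖a - b‖ * ‖1 - ζ‖ ≤ R * t :=
            mul_le_mul_of_nonneg_left (hroot_t ζ hζ) (norm_nonneg _)
        _ < R * 1 := by
            exact mul_lt_mul_of_pos_left ht1 hR
        _ = R := mul_one R
    have hAeq : Asum p K a b (fun x => ∑' n : ℕ, ((n : K) + 1) * c (n + 1) * (x - b) ^ n) N
        = ((p : K) ^ N)⁻¹
          * ∑' n : ℕ, ((b - a) * (((n : K) + 1) * c (n + 1)) * (a - b) ^ n * S n) := by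
      rw [Asum]
      congr 1
      have hstep1 : ∀ ζ ∈ nthRootsFinset (p ^ N) (1 : K),
          (b - a) * ζ * (∑' n : ℕ, ((n : K) + 1) * c (n + 1) * ((a + (b - a) * ζ) - b) ^ n)
            = ∑' n : ℕ, (b - a) * ζ * (((n : K) + 1) * c (n + 1) * ((a - b) * (1 - ζ)) ^ n) := by
        intro ζ hζ
        rw [tsum_mul_left]
        congr 1
        have harg : (a + (b - a) * ζ) - b = (a - b) * (1 - ζ) := by ring
        rw [harg]
      calc ∑ ζ ∈ nthRootsFinset (p ^ N) (1 : K),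
            (b - a) * ζ * (∑' n : ℕ, ((n : K) + 1) * c (n + 1) * ((a + (b - a) * ζ) - b) ^ n)
          = ∑ ζ ∈ nthRootsFinset (p ^ N) (1 : K),
            ∑' n : ℕ, (b - a) * ζ * (((n : K) + 1) * c (n + 1) * ((a - b) * (1 - ζ)) ^ n) :=
            Finset.sum_congr rfl hstep1
        _ = ∑' n : ℕ, ∑ ζ ∈ nthRootsFinset (p ^ N) (1 : K),
            (b - a) * ζ * (((n : K) + 1) * c (n + 1) * ((a - b) * (1 - ζ)) ^ n) :=
            (Summable.tsum_finsetSum hsummand).symm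
        _ = ∑' n : ℕ, ((b - a) * (((n : K) + 1) * c (n + 1)) * (a - b) ^ n * S n) := by
            congr 1
            funext n
            rw [hSdef]
            simp only
            rw [Finset.mul_sum]
            refine Finset.sum_congr rfl fun ζ _ => ?_
            rw [mul_pow]
            ring
    set C₁ : ℝ := M0 * r ^ N * ((p:ℝ) ^ N)⁻¹ with hC₁def
    set C₂ : ℝ := M0 * (p:ℝ) ^ (2 * N + 1) * ((p:ℝ) ^ (p ^ N))⁻¹ with hC₂def
    have hC₁0 : 0 ≤ C₁ := by positivity
    have hC₂0 : 0 ≤ C₂ := by positivity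
    have hrpowid : ((p:ℝ) ^ (2 * N)) ^ β * ((p:ℝ) ^ (2 * N))⁻¹ = r ^ N * ((p:ℝ) ^ N)⁻¹ := by
      have hX : (0:ℝ) ≤ (p:ℝ) := hp0.le
      rw [← Real.rpow_natCast (p:ℝ) (2 * N), ← Real.rpow_natCast (p:ℝ) N,
        ← Real.rpow_mul hX, hrdef, ← Real.rpow_natCast ((p:ℝ) ^ (2 * β - 1 : ℝ)) N,
        ← Real.rpow_mul hX, ← Real.rpow_neg hX, ← Real.rpow_neg hX,
        ← Real.rpow_add hp0, ← Real.rpow_add hp0]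
      congr 1
      push_cast
      ring
    have hw : ∀ n : ℕ,
        ‖(b - a) * (((n : K) + 1) * c (n + 1)) * (a - b) ^ n * S n‖ ≤ max C₁ C₂ := by
      intro n
      rcases lt_or_ge (n + 1) (p ^ N) with hcase | hcase
      · rw [hSzero n hcase, mul_zero, norm_zero]
        exact le_max_of_le_left hC₁0
      have hn₀lt : n₀ < ((n + 1 : ℕ) : ℝ) := by
        refine lt_of_lt_of_le e1 ?_
        have hcast : ((p ^ N : ℕ) : ℝ) ≤ ((n + 1 : ℕ) : ℝ) := Nat.cast_le.mpr hcase
        rw [Nat.cast_pow] at hcast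
        exact hcast
      have hD := hcM (n + 1) hn₀lt
      have hsplit : (b - a) * (((n : K) + 1) * c (n + 1)) * (a - b) ^ n * S n
          = ((b - a) * (a - b) ^ n * c (n + 1)) * (((n : K) + 1) * S n) := by ring
      have h1 : ‖(b - a) * (a - b) ^ n * c (n + 1)‖ = ‖c (n + 1)‖ * R ^ (n + 1) := by
        rw [norm_mul, norm_mul, norm_pow, norm_sub_rev b a, pow_succ]
        ring
      rw [hsplit, norm_mul, h1]
      rcases le_or_gt (n + 1) (p ^ (2 * N)) with hcase2 | hcase2
      · refine le_max_of_le_left ?_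
        calc ‖c (n + 1)‖ * R ^ (n + 1) * ‖((n : K) + 1) * S n‖
            ≤ (M0 * ((n + 1 : ℕ) : ℝ) ^ β) * (((p:ℝ)⁻¹) ^ (2 * N)) :=
              mul_le_mul hD.le (hnS n) (norm_nonneg _) (by positivity)
          _ ≤ (M0 * ((p:ℝ) ^ (2 * N)) ^ β) * (((p:ℝ)⁻¹) ^ (2 * N)) := by
              refine mul_le_mul_of_nonneg_right
                (mul_le_mul_of_nonneg_left ?_ hM0.le) (by positivity)
              refine Real.rpow_le_rpow (by positivity) ?_ hβ0
              have hcast : ((n + 1 : ℕ) : ℝ) ≤ ((p ^ (2 * N) : ℕ) : ℝ) := Nat.cast_le.mpr hcase2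
              rw [Nat.cast_pow] at hcast
              exact hcast
          _ = M0 * (((p:ℝ) ^ (2 * N)) ^ β * ((p:ℝ) ^ (2 * N))⁻¹) := by
              rw [← inv_pow]
              ring
          _ = M0 * (r ^ N * ((p:ℝ) ^ N)⁻¹) := by rw [hrpowid]
          _ = C₁ := by rw [hC₁def]; ring
      · refine le_max_of_le_right ?_
        have hk1 : p ^ N ≤ n / p ^ N := by
          rw [Nat.le_div_iff_mul_le hmpos]
          calc p ^ N * p ^ N = p ^ (2 * N) := by rw [← pow_add]; ring_nf
            _ ≤ n := by omega
        have hk2 : n + 1 ≤ (n / p ^ N + 1) * p ^ N := by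
          refine Nat.succ_le_of_lt ?_
          exact (Nat.div_lt_iff_lt_mul hmpos).mp (Nat.lt_succ_self _)
        have hna : ‖(n : K) + 1‖ ≤ 1 := by
          have hcast : ((n : K) + 1) = ((n + 1 : ℕ) : K) := by push_cast; ring
          rw [hcast]
          exact norm_natCast_le_one K _
        have h2 : ‖((n : K) + 1) * S n‖ ≤ ((p:ℝ)⁻¹) ^ (n / p ^ N) := by
          rw [norm_mul]
          calc ‖(n : K) + 1‖ * ‖S n‖ ≤ 1 * ‖S n‖ :=
                mul_le_mul_of_nonneg_right hna (norm_nonneg _)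
            _ = ‖S n‖ := one_mul _
            _ ≤ ((p:ℝ)⁻¹) ^ (n / p ^ N) := hSle n
        have hone_le : (1:ℝ) ≤ ((n + 1 : ℕ) : ℝ) := by
          exact_mod_cast Nat.succ_le_succ (Nat.zero_le n)
        calc ‖c (n + 1)‖ * R ^ (n + 1) * ‖((n : K) + 1) * S n‖
            ≤ (M0 * ((n + 1 : ℕ) : ℝ) ^ β) * (((p:ℝ)⁻¹) ^ (n / p ^ N)) :=
              mul_le_mul hD.le h2 (norm_nonneg _) (by positivity)
          _ ≤ (M0 * ((n + 1 : ℕ) : ℝ)) * (((p:ℝ)⁻¹) ^ (n / p ^ N)) := by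
              refine mul_le_mul_of_nonneg_right
                (mul_le_mul_of_nonneg_left ?_ hM0.le) (by positivity)
              calc ((n + 1 : ℕ) : ℝ) ^ β ≤ ((n + 1 : ℕ) : ℝ) ^ (1:ℝ) :=
                    Real.rpow_le_rpow_of_exponent_le hone_le (by linarith)
                _ = ((n + 1 : ℕ) : ℝ) := Real.rpow_one _
          _ ≤ (M0 * (((n / p ^ N + 1) * p ^ N : ℕ) : ℝ)) * (((p:ℝ)⁻¹) ^ (n / p ^ N)) := by
              refine mul_le_mul_of_nonneg_right
                (mul_le_mul_of_nonneg_left ?_ hM0.le) (by positivity)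
              exact_mod_cast hk2
          _ = (M0 * (p:ℝ) ^ N) * ((((n / p ^ N : ℕ) : ℝ) + 1) * (((p:ℝ) ^ (n / p ^ N))⁻¹)) := by
              rw [inv_pow]
              push_cast
              ring
          _ ≤ (M0 * (p:ℝ) ^ N) * ((((p ^ N : ℕ) : ℝ) + 1) * (((p:ℝ) ^ (p ^ N))⁻¹)) := by
              refine mul_le_mul_of_nonneg_left ?_ (by positivity)
              exact aux_decr hp2' (n / p ^ N) hk1
          _ ≤ (M0 * (p:ℝ) ^ N) * ((p:ℝ) ^ (N + 1) * (((p:ℝ) ^ (p ^ N))⁻¹)) := by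
              refine mul_le_mul_of_nonneg_left
                (mul_le_mul_of_nonneg_right ?_ (by positivity)) (by positivity)
              have hgeq1 : (1:ℝ) ≤ (p:ℝ) ^ N := one_le_pow₀ hp1.le
              calc ((p ^ N : ℕ) : ℝ) + 1 ≤ 2 * (p:ℝ) ^ N := by
                    rw [Nat.cast_pow]
                    linarith
                _ ≤ (p:ℝ) * (p:ℝ) ^ N := mul_le_mul_of_nonneg_right hp2' (by positivity)
                _ = (p:ℝ) ^ (N + 1) := by rw [pow_succ]; ring
          _ = C₂ := by
              rw [hC₂def, show 2 * N + 1 = N + (N + 1) by ring, pow_add]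
              ring
    have hT : ‖∑' n : ℕ, ((b - a) * (((n : K) + 1) * c (n + 1)) * (a - b) ^ n * S n)‖
        ≤ max C₁ C₂ := norm_tsum_le_of_forall_le_of_nonneg (le_max_of_le_left hC₁0) hw
    rw [sub_zero, hAeq, norm_mul]
    have hpref : ‖((p : K) ^ N)⁻¹‖ = (p:ℝ) ^ N := by
      rw [norm_inv, norm_pow, hnormp, ← inv_pow, inv_inv]
    rw [hpref]
    have hfin : (p:ℝ) ^ N * max C₁ C₂ < ε := by
      rw [mul_max_of_nonneg _ _ (by positivity : (0:ℝ) ≤ (p:ℝ) ^ N)]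
      apply max_lt
      · have heq1 : (p:ℝ) ^ N * C₁ = M0 * r ^ N := by
          rw [hC₁def]
          have hne : ((p:ℝ) ^ N) ≠ 0 := by positivity
          field_simp
        rw [heq1]
        exact e2
      · have heq2 : (p:ℝ) ^ N * C₂ = M0 * ((p:ℝ) ^ (3 * N + 1) * ((p:ℝ) ^ (p ^ N))⁻¹) := by
          rw [hC₂def, show 3 * N + 1 = N + (2 * N + 1) by ring, pow_add]
          ring
        rw [heq2]
        have h7 : (p:ℝ) ^ (3 * N + 1) * ((p:ℝ) ^ (p ^ N))⁻¹ ≤ ((p:ℝ) ^ N)⁻¹ := by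
          rw [← div_eq_mul_inv, ← one_div, div_le_div_iff₀ (by positivity) (by positivity),
            one_mul, ← pow_add]
          refine pow_le_pow_right₀ hp1.le ?_
          omega
        calc M0 * ((p:ℝ) ^ (3 * N + 1) * ((p:ℝ) ^ (p ^ N))⁻¹) ≤ M0 * ((p:ℝ) ^ N)⁻¹ :=
              mul_le_mul_of_nonneg_left h7 hM0.le
          _ < ε := e4
    calc (p:ℝ) ^ N * ‖∑' n : ℕ, ((b - a) * (((n : K) + 1) * c (n + 1)) * (a - b) ^ n * S n)‖
        ≤ (p:ℝ) ^ N * max C₁ C₂ := mul_le_mul_of_nonneg_left hT (by positivity)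
      _ < ε := hfin
  refine ⟨φ.k₀ + N₀, Nat.le_add_right _ _, fun k hk => ?_⟩
  have hgrow : ∀ d : ℕ, d ≤ φ.toFun (φ.k₀ + d) := by
    intro d
    induction d with
    | zero => exact Nat.zero_le _
    | succ d ih =>
      have h := φ.mono (φ.k₀ + d) (φ.k₀ + d + 1) (Nat.le_add_right _ _) (Nat.lt_succ_self _)
      have hrfl : φ.k₀ + (d + 1) = φ.k₀ + d + 1 := by omega
      rw [hrfl]
      omega
  have hkN : N₀ ≤ φ.toFun k := by
    have h1 := hgrow (k - φ.k₀)
    have h2 : φ.k₀ + (k - φ.k₀) = k := by omega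
    rw [h2] at h1
    omega
  exact key _ hkN
end

section
/- Let p be an odd prime, let a, b ∈ ℂ_p with R = |a − b|_p > 0, and let x₀ ∈ ℂ_p with |x₀ − a|_p < R (so x₀ is interior to the circle |x − a|_p = R). Then for every interlocked family Φ of path sequences, ∫_{𝒜(a,b),Φ} 1/(x − x₀) dx = 1. -/
/-!
Throughout, `K` plays the role of `ℂ_p`, the completion of an algebraic closure of `ℚ_p`:
it is a complete, algebraically closed, nonarchimedean (ultrametric) normed field equipped
with an isometric `ℚ_[p]`-algebra structure (hypothesis `hKext`).
-/

open scoped BigOperators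

open Polynomial in
lemma eval_derivative_prod_X_sub_C {K : Type*} [Field K] [DecidableEq K]
    (s : Finset K) (c : K) :
    eval c (derivative (∏ ζ ∈ s, (X - C ζ))) = ∑ ζ ∈ s, ∏ ζ' ∈ s.erase ζ, (c - ζ') := by
  induction s using Finset.induction_on with
  | empty => simp
  | insert a s ha ih =>
    rw [Finset.prod_insert ha, derivative_mul, derivative_X_sub_C, one_mul, eval_add, eval_mul,
      eval_sub, eval_X, eval_C, ih, Finset.sum_insert ha, Finset.erase_insert ha, eval_prod]
    simp only [eval_sub, eval_X, eval_C]
    rw [Finset.mul_sum]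
    congr 1
    refine Finset.sum_congr rfl fun ζ hζ => ?_
    rw [Finset.erase_insert_of_ne (by rintro rfl; exact ha hζ),
      Finset.prod_insert (fun h => ha (Finset.mem_of_mem_erase h))]

open Polynomial in
lemma sum_inv_roots {K : Type*} [Field K] [IsAlgClosed K] [CharZero K]
    (n : ℕ) (hn : 0 < n) (c : K) (hζc : ∀ ζ ∈ nthRootsFinset n (1 : K), ζ ≠ c)
    (hc : c ^ n ≠ 1) :
    ∑ ζ ∈ nthRootsFinset n (1 : K), (ζ - c)⁻¹ = -((n : K) * c ^ (n - 1)) / (c ^ n - 1) := by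
  classical
  haveI : NeZero n := ⟨hn.ne'⟩
  obtain ⟨ζ₀, hζ₀⟩ := HasEnoughRootsOfUnity.exists_primitiveRoot K n
  have hprod : (X ^ n - 1 : K[X]) = ∏ ζ ∈ nthRootsFinset n (1 : K), (X - C ζ) :=
    X_pow_sub_one_eq_prod hn hζ₀
  have hev : (c ^ n - 1) = ∏ ζ ∈ nthRootsFinset n (1 : K), (c - ζ) := by
    have := congrArg (eval c) hprod
    simpa [eval_prod] using this
  have hderiv : (n : K) * c ^ (n - 1) =
      ∑ ζ ∈ nthRootsFinset n (1 : K), ∏ ζ' ∈ (nthRootsFinset n (1 : K)).erase ζ, (c - ζ') := by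
    have := congrArg (eval c) (congrArg derivative hprod)
    rw [eval_derivative_prod_X_sub_C] at this
    simpa [derivative_X_pow] using this
  have key : (∑ ζ ∈ nthRootsFinset n (1 : K), (ζ - c)⁻¹) * (c ^ n - 1)
      = -((n : K) * c ^ (n - 1)) := by
    rw [Finset.sum_mul, hderiv, ← Finset.sum_neg_distrib]
    refine Finset.sum_congr rfl fun ζ hζ => ?_
    rw [hev, ← Finset.mul_prod_erase _ _ hζ]
    have h1 : ζ - c ≠ 0 := sub_ne_zero.2 (hζc ζ hζ)
    have : c - ζ = -(ζ - c) := by ring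
    rw [this, ← mul_assoc, mul_neg, inv_mul_cancel₀ h1]
    ring
  rw [eq_div_iff (sub_ne_zero.2 hc)]
  exact key

open Polynomial in
lemma asum_norm_eq {K : Type*} [NormedField K] [IsAlgClosed K] [IsUltrametricDist K] [CharZero K]
    (n : ℕ) (hn : 0 < n) (a b x₀ : K) (hd : b - a ≠ 0) (c : K)
    (hceq : x₀ - a = c * (b - a)) (hc : ‖c‖ < 1) :
    ‖((n : K))⁻¹ * (∑ ζ ∈ nthRootsFinset n (1 : K),
        (b - a) * ζ * (a + (b - a) * ζ - x₀)⁻¹) - 1‖ = ‖c‖ ^ n := by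
  classical
  haveI : NeZero n := ⟨hn.ne'⟩
  obtain ⟨ζ₀, hζ₀⟩ := HasEnoughRootsOfUnity.exists_primitiveRoot K n
  have hcard : (nthRootsFinset n (1 : K)).card = n := hζ₀.card_nthRootsFinset
  have hnorm1 : ∀ ζ ∈ nthRootsFinset n (1 : K), ‖ζ‖ = 1 := by
    intro ζ hζ
    have h1 : ζ ^ n = 1 := (mem_nthRootsFinset hn (1 : K)).mp hζ
    have := congrArg norm h1
    rw [norm_pow, norm_one] at this
    exact (pow_eq_one_iff_of_nonneg (norm_nonneg _) hn.ne').mp this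
  have hζc : ∀ ζ ∈ nthRootsFinset n (1 : K), ζ ≠ c := by
    intro ζ hζ h
    have h1 := hnorm1 ζ hζ
    rw [h] at h1
    exact absurd h1 hc.ne
  have hζcne : ∀ ζ ∈ nthRootsFinset n (1 : K), ζ - c ≠ 0 := fun ζ hζ => sub_ne_zero.2 (hζc ζ hζ)
  have hcn_lt : ‖c ^ n‖ < 1 := by
    rw [norm_pow]
    exact pow_lt_one₀ (norm_nonneg _) hc hn.ne'
  have hcn : c ^ n ≠ 1 := fun h => by rw [h, norm_one] at hcn_lt; exact lt_irrefl 1 hcn_lt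
  have hterm : ∀ ζ ∈ nthRootsFinset n (1 : K),
      (b - a) * ζ * (a + (b - a) * ζ - x₀)⁻¹ = 1 + c * (ζ - c)⁻¹ := by
    intro ζ hζ
    have hden : a + (b - a) * ζ - x₀ = (b - a) * (ζ - c) := by linear_combination -hceq
    rw [hden, mul_inv, ← mul_assoc, mul_comm ((b - a) * ζ) (b - a)⁻¹, ← mul_assoc,
      inv_mul_cancel₀ hd, one_mul]
    rw [← div_eq_mul_inv, ← div_eq_mul_inv, eq_comm, ← div_self (hζcne ζ hζ), ← add_div]
    congr 1
    ring
  have hsum : ∑ ζ ∈ nthRootsFinset n (1 : K), (b - a) * ζ * (a + (b - a) * ζ - x₀)⁻¹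
      = (n : K) + c * (-((n : K) * c ^ (n - 1)) / (c ^ n - 1)) := by
    rw [Finset.sum_congr rfl hterm, Finset.sum_add_distrib, Finset.sum_const, hcard,
      ← Finset.mul_sum, sum_inv_roots n hn c hζc hcn]
    simp
  have hnK : (n : K) ≠ 0 := Nat.cast_ne_zero.mpr hn.ne'
  have hden1 : c ^ n - 1 ≠ 0 := sub_ne_zero.2 hcn
  have hpow : c * c ^ (n - 1) = c ^ n := by
    rw [← pow_succ']
    congr 1
    omega
  have h3 : c * (-((n : K) * c ^ (n - 1)) / (c ^ n - 1)) = -((n : K) * c ^ n) / (c ^ n - 1) := by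
    rw [← mul_div_assoc, mul_neg, ← mul_assoc, mul_comm c ((n : K)), mul_assoc, hpow]
  have hmain : ((n : K))⁻¹ * (∑ ζ ∈ nthRootsFinset n (1 : K),
      (b - a) * ζ * (a + (b - a) * ζ - x₀)⁻¹) - 1 = -(c ^ n) / (c ^ n - 1) := by
    rw [hsum, h3]
    field_simp
    ring
  rw [hmain]
  have hden_norm : ‖c ^ n - 1‖ = 1 := by
    rw [sub_eq_add_neg, IsUltrametricDist.norm_add_eq_max_of_norm_ne_norm
      (by rw [norm_neg, norm_one]; exact hcn_lt.ne), norm_neg, norm_one]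
    exact max_eq_right hcn_lt.le
  rw [norm_div, norm_neg, hden_norm, div_one, norm_pow]

lemma pathseq_growth (φ : PathSeq) : ∀ j : ℕ, j < φ.toFun (φ.k₀ + j) := by
  intro j
  induction j with
  | zero => simpa using φ.pos φ.k₀ le_rfl
  | succ j ih =>
    have h2 : φ.toFun (φ.k₀ + j) < φ.toFun (φ.k₀ + (j + 1)) :=
      φ.mono _ _ (Nat.le_add_right _ _) (by omega)
    omega

/-- If `x₀` is interior to the circle `|x - a| = R` (i.e. `|x₀ - a| < R`),
then for every interlocked family `Φ`, `∫_{𝒜(a,b),Φ} 1/(x - x₀) dx = 1`. -/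
theorem stmt_7 (p : ℕ) [Fact (Nat.Prime p)] (hp2 : p ≠ 2)
    (K : Type*) [NormedField K] [CompleteSpace K] [IsAlgClosed K] [IsUltrametricDist K]
    [Algebra ℚ_[p] K] (hKext : ∀ q : ℚ_[p], ‖algebraMap ℚ_[p] K q‖ = ‖q‖)
    (a b : K) (hR : 0 < ‖a - b‖) (x₀ : K) (hx₀ : ‖x₀ - a‖ < ‖a - b‖)
    (Φ : Set PathSeq) (hΦ : Interlocked Φ) :
    HasIntegral p K a b (fun x => (x - x₀)⁻¹) Φ 1 := by
  haveI : CharZero K := charZero_of_injective_algebraMap (algebraMap ℚ_[p] K).injective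
  have hp : Nat.Prime p := Fact.out
  intro ε hε
  obtain ⟨φ, hφ⟩ := hΦ.1
  have hba : 0 < ‖b - a‖ := by rwa [norm_sub_rev]
  have hd : b - a ≠ 0 := fun h => by simp [h] at hba
  set c : K := (x₀ - a) / (b - a) with hcdef
  have hceq : x₀ - a = c * (b - a) := (div_mul_cancel₀ _ hd).symm
  have hc : ‖c‖ < 1 := by
    rw [hcdef, norm_div, div_lt_one hba]
    rwa [← norm_sub_rev a b]
  obtain ⟨m, hm⟩ := exists_pow_lt_of_lt_one hε hc
  refine ⟨φ, hφ, φ.k₀ + m, Nat.le_add_right _ _, fun k hk => ?_⟩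
  have hkk₀ : φ.k₀ ≤ k := le_of_lt (lt_of_le_of_lt (Nat.le_add_right _ _) hk)
  set N := φ.toFun k with hNdef
  have hNpos : 0 < N := φ.pos k hkk₀
  have hmN : m < N := by
    have h1 : k - φ.k₀ < φ.toFun (φ.k₀ + (k - φ.k₀)) := pathseq_growth φ (k - φ.k₀)
    rw [show φ.k₀ + (k - φ.k₀) = k by omega] at h1
    omega
  have hNle : m ≤ p ^ N := le_of_lt (lt_of_lt_of_le hmN
    (le_of_lt (Nat.lt_pow_self (n := N) hp.one_lt)))
  have hA : Asum p K a b (fun x => (x - x₀)⁻¹) N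
      = (((p ^ N : ℕ) : K))⁻¹ * (∑ ζ ∈ Polynomial.nthRootsFinset (p ^ N) (1 : K),
        (b - a) * ζ * (a + (b - a) * ζ - x₀)⁻¹) := by
    rw [Asum]
    push_cast
    rfl
  have hnorm := asum_norm_eq (p ^ N) (pow_pos hp.pos N) a b x₀ hd c hceq hc
  calc ‖Asum p K a b (fun x => (x - x₀)⁻¹) N - 1‖
      = ‖c‖ ^ (p ^ N) := by rw [hA]; exact hnorm
    _ ≤ ‖c‖ ^ m := pow_le_pow_of_le_one (norm_nonneg _) hc.le hNle
    _ < ε := hm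
end
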